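/- arXiv:2007.05145 — 7 statements merged into one kernel-verified Lean document; each statement's English description precedes it below -/
import Mathlib

section
/- Let P and Q be probability distributions on a countable set X and let ε > 0. Define S* := {x ∈ X : Q({x}) ≤ P({x})/ε}. Then for every subset S ⊆ X with rej_P(S) ≤ rej_P(S*), it holds that rej_Q(S) ≤ rej_Q(S*). -/
open MeasureTheory

lemma meas_toReal_eq_tsum {X : Type*} [Countable X] [MeasurableSpace X]
    [MeasurableSingletonClass X] (μ : Measure X) [IsFiniteMeasure μ] (A : Set X) :
    (μ A).toReal = ∑' x : A, (μ {(x : X)}).toReal := by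
  have h : (∑' x : A, μ {(x : X)}) = μ A := by
    have := tsum_measure_preimage_singleton (μ := μ) (s := A) (f := id)
      (Set.to_countable A) (fun y _ => measurableSet_preimage measurable_id (measurableSet_singleton y))
    simpa using this
  rw [← h, ENNReal.tsum_toReal_eq]
  intro a
  exact measure_ne_top μ _

lemma summable_meas {X : Type*} [Countable X] [MeasurableSpace X]
    [MeasurableSingletonClass X] (μ : Measure X) [IsFiniteMeasure μ] (A : Set X) :
    Summable (fun x : A => (μ {(x : X)}).toReal) := by
  apply ENNReal.summable_toReal
  have h : (∑' x : A, μ {(x : X)}) = μ A := by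
    have := tsum_measure_preimage_singleton (μ := μ) (s := A) (f := id)
      (Set.to_countable A) (fun y _ => measurableSet_preimage measurable_id (measurableSet_singleton y))
    simpa using this
  rw [h]
  exact measure_ne_top μ _

/-- Let `P`, `Q` be probability distributions on a countable set `X`
and `ε > 0`. Define `S* = {x | Q({x}) ≤ P({x})/ε}`. Then for every `S ⊆ X` with
`rej_P(S) ≤ rej_P(S*)` it holds that `rej_Q(S) ≤ rej_Q(S*)`. -/
theorem stmt2 {X : Type*} [Countable X] [MeasurableSpace X] [MeasurableSingletonClass X]
    (P Q : Measure X) [IsProbabilityMeasure P] [IsProbabilityMeasure Q]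
    (ε : ℝ) (hε : 0 < ε)
    (Sstar : Set X) (hSstar : Sstar = {a : X | (Q {a}).toReal ≤ (P {a}).toReal / ε})
    (S : Set X) (hS : (P Sᶜ).toReal ≤ (P Sstarᶜ).toReal) :
    (Q Sᶜ).toReal ≤ (Q Sstarᶜ).toReal := by
  -- every set is measurable
  have hmeas : ∀ A : Set X, MeasurableSet A := fun A => (Set.to_countable A).measurableSet
  -- splitting lemma
  have hsplit : ∀ (μ : Measure X), IsFiniteMeasure μ →
      (μ Sᶜ).toReal = (μ (Sᶜ ∩ Sstar)).toReal + (μ (Sᶜ ∩ Sstarᶜ)).toReal ∧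
      (μ Sstarᶜ).toReal = (μ (S ∩ Sstarᶜ)).toReal + (μ (Sᶜ ∩ Sstarᶜ)).toReal := by
    intro μ hfin
    constructor
    · have := measure_inter_add_diff (μ := μ) Sᶜ (hmeas Sstar)
      rw [Set.diff_eq] at this
      rw [← this, ENNReal.toReal_add (measure_ne_top μ _) (measure_ne_top μ _)]
    · have := measure_inter_add_diff (μ := μ) Sstarᶜ (hmeas S)
      rw [Set.diff_eq] at this
      rw [Set.inter_comm Sstarᶜ S, Set.inter_comm Sstarᶜ Sᶜ] at this
      rw [← this, ENNReal.toReal_add (measure_ne_top μ _) (measure_ne_top μ _)]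
  obtain ⟨hQ1, hQ2⟩ := hsplit Q inferInstance
  obtain ⟨hP1, hP2⟩ := hsplit P inferInstance
  -- pointwise bounds summed up
  have hA : ε * (Q (Sᶜ ∩ Sstar)).toReal ≤ (P (Sᶜ ∩ Sstar)).toReal := by
    rw [meas_toReal_eq_tsum Q, meas_toReal_eq_tsum P, ← tsum_mul_left]
    apply Summable.tsum_le_tsum _ ((summable_meas Q _).mul_left ε) (summable_meas P _)
    rintro ⟨x, hx1, hx2⟩
    have : (Q {x}).toReal ≤ (P {x}).toReal / ε := by rw [hSstar] at hx2; exact hx2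
    calc ε * (Q {x}).toReal ≤ ε * ((P {x}).toReal / ε) := by
          exact mul_le_mul_of_nonneg_left this hε.le
      _ = (P {x}).toReal := by field_simp
  have hB : (P (S ∩ Sstarᶜ)).toReal ≤ ε * (Q (S ∩ Sstarᶜ)).toReal := by
    rw [meas_toReal_eq_tsum Q, meas_toReal_eq_tsum P, ← tsum_mul_left]
    apply Summable.tsum_le_tsum _ (summable_meas P _) ((summable_meas Q _).mul_left ε)
    rintro ⟨x, hx1, hx2⟩
    have hlt : (P {x}).toReal / ε < (Q {x}).toReal := by
      rw [hSstar] at hx2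
      exact lt_of_not_ge hx2
    calc (P {x}).toReal = ε * ((P {x}).toReal / ε) := by field_simp
      _ ≤ ε * (Q {x}).toReal := mul_le_mul_of_nonneg_left hlt.le hε.le
  -- combine
  have key : ε * ((Q Sᶜ).toReal - (Q Sstarᶜ).toReal) ≤
      (P Sᶜ).toReal - (P Sstarᶜ).toReal := by
    rw [hQ1, hQ2, hP1, hP2]
    ring_nf
    nlinarith [hA, hB]
  nlinarith [key, hS]
end

section
/- For any n ∈ ℕ, any probability distribution P on a countable domain X, any family G of binary classifiers g : X → {0,1}, and any ε > 0: the probability over independent samples x ∼ P^n and z ∼ P^n that there exists g ∈ G with (1/n)·Σ_{i∈[n]} g(x_i) = 0 and (1/n)·Σ_{i∈[n]} g(z_i) ≥ ε is at most Π_G[2n]·2^{−εn}. -/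
open MeasureTheory
open scoped ENNReal

/-- The growth function `Π_G[m]`: the maximum, over `w ∈ X^m`, of the number of
distinct label vectors `(g(w_1),…,g(w_m))` as `g` ranges over `G`. -/
noncomputable def growth {X : Type*} (G : Set (X → Bool)) (m : ℕ) : ℕ :=
  ⨆ w : Fin m → X, Set.ncard {v : Fin m → Bool | ∃ g ∈ G, v = fun i => g (w i)}

/-- Coordinatewise swap of a double sample according to `σ`. -/
def swapT {X : Type*} (n : ℕ) (σ : Fin n → Bool) (ω : (Fin n → X) × (Fin n → X)) :
    (Fin n → X) × (Fin n → X) :=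
  (fun i => if σ i then ω.2 i else ω.1 i, fun i => if σ i then ω.1 i else ω.2 i)

lemma swapT_invol {X : Type*} (n : ℕ) (σ : Fin n → Bool) :
    Function.Involutive (swapT (X := X) n σ) := by
  intro ω
  unfold swapT
  ext i <;> by_cases h : σ i <;> simp [h]

open scoped Classical in
lemma core_count {X : Type*} {n : ℕ} (hn : 0 < n) (G : Set (X → Bool)) {ε : ℝ} (hε : 0 < ε)
    (x z : Fin n → X) :
    (((Finset.univ : Finset (Fin n → Bool)).filter fun σ => ∃ g ∈ G,
        (Set.ncard {i : Fin n | g ((swapT n σ (x, z)).1 i) = true} : ℝ) / n = 0 ∧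
        ε ≤ (Set.ncard {i : Fin n | g ((swapT n σ (x, z)).2 i) = true} : ℝ) / n).card : ℝ) ≤
      (growth G (2 * n) : ℝ) * ((2 ^ n : ℕ) : ℝ) * (2 : ℝ) ^ (-(ε * n)) := by
  classical
  have hn' : (0:ℝ) < n := by exact_mod_cast hn
  have h2n : ∀ i : Fin n, (i : ℕ) < 2 * n := fun i => by have := i.isLt; omega
  have h2n' : ∀ i : Fin n, n + (i : ℕ) < 2 * n := fun i => by have := i.isLt; omega
  set e1 : Fin n → Fin (2 * n) := fun i => ⟨i, h2n i⟩ with he1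
  set e2 : Fin n → Fin (2 * n) := fun i => ⟨n + i, h2n' i⟩ with he2
  set p : Fin (2 * n) → X := fun j =>
    if h : (j : ℕ) < n then x ⟨j, h⟩ else z ⟨(j : ℕ) - n, by omega⟩ with hp
  have hp1 : ∀ i : Fin n, p (e1 i) = x i := fun i => dif_pos i.isLt
  have hp2 : ∀ i : Fin n, p (e2 i) = z i := by
    intro i
    have h : ¬ ((n + (i : ℕ)) < n) := by omega
    simp only [hp, he2, dif_neg h]
    congr 1
    ext
    simp
  set Bset : Set (Fin (2 * n) → Bool) := {v | ∃ g ∈ G, v = fun j => g (p j)} with hBs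
  have hBfin : Bset.Finite := Set.toFinite _
  set Bfin := hBfin.toFinset with hBF
  have hBcard : Bfin.card ≤ growth G (2 * n) := by
    rw [← Set.ncard_eq_toFinset_card Bset hBfin]
    refine le_ciSup (f := fun w : Fin (2*n) → X =>
      Set.ncard {v : Fin (2*n) → Bool | ∃ g ∈ G, v = fun i => g (w i)}) ?_ p
    refine ⟨(Set.univ : Set (Fin (2*n) → Bool)).ncard, ?_⟩
    rintro _ ⟨w, rfl⟩
    exact Set.ncard_le_ncard (Set.subset_univ _) Set.finite_univ
  set Fv : (Fin (2 * n) → Bool) → Finset (Fin n → Bool) := fun v =>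
    Finset.univ.filter fun σ =>
      (∀ i : Fin n, (if σ i then v (e2 i) else v (e1 i)) = false) ∧
      ε * n ≤ (Set.ncard {i : Fin n | (if σ i then v (e1 i) else v (e2 i)) = true} : ℝ) with hFv
  -- the original filter is contained in the biUnion of the Fv
  have hsub : ((Finset.univ : Finset (Fin n → Bool)).filter fun σ => ∃ g ∈ G,
        (Set.ncard {i : Fin n | g ((swapT n σ (x, z)).1 i) = true} : ℝ) / n = 0 ∧
        ε ≤ (Set.ncard {i : Fin n | g ((swapT n σ (x, z)).2 i) = true} : ℝ) / n)
      ⊆ Bfin.biUnion Fv := by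
    intro σ hσ
    rw [Finset.mem_filter] at hσ
    obtain ⟨-, g, hg, h1, h2⟩ := hσ
    refine Finset.mem_biUnion.2 ⟨fun j => g (p j), hBfin.mem_toFinset.2 ⟨g, hg, rfl⟩, ?_⟩
    have key1 : ∀ i : Fin n, g ((swapT n σ (x, z)).1 i)
        = (if σ i then (fun j => g (p j)) (e2 i) else (fun j => g (p j)) (e1 i)) := by
      intro i
      simp only [swapT, hp1, hp2]
      by_cases h : σ i <;> simp [h]
    have key2 : ∀ i : Fin n, g ((swapT n σ (x, z)).2 i)
        = (if σ i then (fun j => g (p j)) (e1 i) else (fun j => g (p j)) (e2 i)) := by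
      intro i
      simp only [swapT, hp1, hp2]
      by_cases h : σ i <;> simp [h]
    rw [hFv, Finset.mem_filter]
    refine ⟨Finset.mem_univ _, ?_, ?_⟩
    · -- all first-half labels false
      have hzero : {i : Fin n | g ((swapT n σ (x, z)).1 i) = true} = ∅ := by
        have : (Set.ncard {i : Fin n | g ((swapT n σ (x, z)).1 i) = true} : ℝ) = 0 := by
          field_simp at h1
          exact_mod_cast h1
        have hcard : Set.ncard {i : Fin n | g ((swapT n σ (x, z)).1 i) = true} = 0 := by
          exact_mod_cast this
        exact (Set.ncard_eq_zero (Set.toFinite _)).1 hcard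
      intro i
      have : i ∉ ({i : Fin n | g ((swapT n σ (x, z)).1 i) = true}) := by rw [hzero]; exact id
      rw [Set.mem_setOf_eq, key1 i] at this
      exact Bool.not_eq_true _ ▸ (by simpa using this)
    · -- second-half count
      have := (le_div_iff₀ hn').1 h2
      calc ε * n ≤ (Set.ncard {i : Fin n | g ((swapT n σ (x, z)).2 i) = true} : ℝ) := this
        _ = _ := by
            congr 2
            ext i
            rw [Set.mem_setOf_eq, Set.mem_setOf_eq, key2 i]
  -- cardinality of each Fv
  have hFvcard : ∀ v, ((Fv v).card : ℝ) ≤ ((2 ^ n : ℕ) : ℝ) * (2 : ℝ) ^ (-(ε * n)) := by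
    intro v
    rcases Finset.eq_empty_or_nonempty (Fv v) with h | ⟨σ0, hσ0⟩
    · rw [h]
      simp only [Finset.card_empty, Nat.cast_zero]
      positivity
    set D : Finset (Fin n) := Finset.univ.filter fun i => v (e1 i) ≠ v (e2 i) with hD
    -- forced values on D
    have forced : ∀ σ ∈ Fv v, ∀ i ∈ D, σ i = v (e1 i) := by
      intro σ hσ i hi
      rw [hFv, Finset.mem_filter] at hσ
      obtain ⟨-, hfalse, -⟩ := hσ
      rw [hD, Finset.mem_filter] at hi
      obtain ⟨-, hne⟩ := hi
      have := hfalse i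
      cases hσi : σ i
      · rw [hσi] at this; simp at this; rw [this]
      · rw [hσi] at this; simp at this
        cases hv1 : v (e1 i)
        · rw [hv1, this] at hne; simp at hne
        · rfl
    -- D is large
    have hDlarge : ε * n ≤ (D.card : ℝ) := by
      rw [hFv, Finset.mem_filter] at hσ0
      obtain ⟨-, hfalse, hcnt⟩ := hσ0
      refine hcnt.trans ?_
      have hsub2 : {i : Fin n | (if σ0 i then v (e1 i) else v (e2 i)) = true} ⊆ (D : Set (Fin n)) := by
        intro i hi
        rw [Set.mem_setOf_eq] at hi
        have hf := hfalse i
        simp only [Finset.coe_filter, Set.mem_setOf_eq, hD, Finset.mem_filter]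
        refine ⟨Finset.mem_univ _, ?_⟩
        cases h : σ0 i
        · rw [h] at hi hf; simp at hi hf; rw [hi, hf]; simp
        · rw [h] at hi hf; simp at hi hf; rw [hi, hf]; simp
      have := Set.ncard_le_ncard hsub2 (Set.toFinite _)
      rw [Set.ncard_coe_finset] at this
      exact_mod_cast this
    have hDn : D.card ≤ n := by
      have := Finset.card_le_univ D
      simpa using this
    -- injectivity bound
    have hcardle : (Fv v).card ≤ 2 ^ (n - D.card) := by
      have hinj : (Fv v).card ≤ Fintype.card ({i : Fin n // i ∉ D} → Bool) := by
        rw [← Finset.card_univ]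
        refine Finset.card_le_card_of_injOn
          (fun σ (i : {i : Fin n // i ∉ D}) => σ i.1) (fun _ _ => Finset.mem_univ _) ?_
        intro σ hσ τ hτ hst
        funext i
        by_cases hi : i ∈ D
        · rw [forced σ hσ i hi, forced τ hτ i hi]
        · exact congrFun hst ⟨i, hi⟩
      refine hinj.trans_eq ?_
      rw [Fintype.card_fun]
      congr 1
      · rw [Fintype.card_subtype_compl]
        congr 1
        · exact Fintype.card_fin n
        · exact Fintype.card_coe D
    -- convert to real
    calc ((Fv v).card : ℝ) ≤ ((2 ^ (n - D.card) : ℕ) : ℝ) := by exact_mod_cast hcardle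
      _ = (2 : ℝ) ^ (((n - D.card : ℕ) : ℝ)) := by
          rw [Real.rpow_natCast]; push_cast; ring
      _ ≤ (2 : ℝ) ^ ((n : ℝ) - ε * n) := by
          apply Real.rpow_le_rpow_of_exponent_le (by norm_num)
          rw [Nat.cast_sub hDn]
          linarith
      _ = ((2 ^ n : ℕ) : ℝ) * (2 : ℝ) ^ (-(ε * n)) := by
          rw [sub_eq_add_neg, Real.rpow_add (by norm_num : (0:ℝ) < 2)]
          congr 1
          rw [Real.rpow_natCast]
          push_cast; ring
  -- put everything together
  calc (((Finset.univ : Finset (Fin n → Bool)).filter fun σ => ∃ g ∈ G,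
        (Set.ncard {i : Fin n | g ((swapT n σ (x, z)).1 i) = true} : ℝ) / n = 0 ∧
        ε ≤ (Set.ncard {i : Fin n | g ((swapT n σ (x, z)).2 i) = true} : ℝ) / n).card : ℝ)
      ≤ ((Bfin.biUnion Fv).card : ℝ) := by exact_mod_cast Finset.card_le_card hsub
    _ ≤ ((∑ v ∈ Bfin, (Fv v).card : ℕ) : ℝ) := by exact_mod_cast Finset.card_biUnion_le
    _ = ∑ v ∈ Bfin, ((Fv v).card : ℝ) := by push_cast; rfl
    _ ≤ ∑ v ∈ Bfin, ((2 ^ n : ℕ) : ℝ) * (2 : ℝ) ^ (-(ε * n)) :=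
        Finset.sum_le_sum fun v _ => hFvcard v
    _ = (Bfin.card : ℝ) * (((2 ^ n : ℕ) : ℝ) * (2 : ℝ) ^ (-(ε * n))) := by
        rw [Finset.sum_const, nsmul_eq_mul]
    _ ≤ (growth G (2 * n) : ℝ) * (((2 ^ n : ℕ) : ℝ) * (2 : ℝ) ^ (-(ε * n))) := by
        apply mul_le_mul_of_nonneg_right (by exact_mod_cast hBcard)
        positivity
    _ = (growth G (2 * n) : ℝ) * ((2 ^ n : ℕ) : ℝ) * (2 : ℝ) ^ (-(ε * n)) := by ring

/-- For any `n`, distribution `P` on countable `X`, family `G` of binary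
classifiers, and `ε > 0`: the probability over `x ∼ Pⁿ`, `z ∼ Pⁿ` that some `g ∈ G`
has `(1/n)·Σ g(x_i) = 0` and `(1/n)·Σ g(z_i) ≥ ε` is at most `Π_G[2n]·2^{−εn}`. -/
theorem stmt3 {X : Type*} [Countable X] [MeasurableSpace X] [MeasurableSingletonClass X]
    (n : ℕ) (P : Measure X) [IsProbabilityMeasure P]
    (G : Set (X → Bool)) (ε : ℝ) (hε : 0 < ε) :
    (((Measure.pi fun _ : Fin n => P).prod (Measure.pi fun _ : Fin n => P))
      {ω : (Fin n → X) × (Fin n → X) | ∃ g ∈ G,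
        (Set.ncard {i : Fin n | g (ω.1 i) = true} : ℝ) / n = 0 ∧
        ε ≤ (Set.ncard {i : Fin n | g (ω.2 i) = true} : ℝ) / n}).toReal ≤
      (growth G (2 * n) : ℝ) * (2 : ℝ) ^ (-(ε * n)) := by
  classical
  rcases Nat.eq_zero_or_pos n with hn | hn
  · subst hn
    have hA : {ω : (Fin 0 → X) × (Fin 0 → X) | ∃ g ∈ G,
        (Set.ncard {i : Fin 0 | g (ω.1 i) = true} : ℝ) / (0:ℕ) = 0 ∧
        ε ≤ (Set.ncard {i : Fin 0 | g (ω.2 i) = true} : ℝ) / (0:ℕ)} = ∅ := by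
      ext ω
      simp only [Set.mem_setOf_eq, Set.mem_empty_iff_false, iff_false, not_exists]
      rintro g ⟨hg, h1, h2⟩
      rw [Nat.cast_zero, div_zero] at h2
      exact absurd h2 (not_le.2 hε)
    rw [hA, measure_empty, ENNReal.toReal_zero]
    positivity
  set μ : Measure (Fin n → X) := Measure.pi fun _ : Fin n => P with hμdef
  set ν : Measure ((Fin n → X) × (Fin n → X)) := μ.prod μ with hνdef
  set A : Set ((Fin n → X) × (Fin n → X)) := {ω | ∃ g ∈ G,
        (Set.ncard {i : Fin n | g (ω.1 i) = true} : ℝ) / n = 0 ∧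
        ε ≤ (Set.ncard {i : Fin n | g (ω.2 i) = true} : ℝ) / n} with hAdef
  have hμsing : ∀ y : Fin n → X, μ {y} = ∏ i, P {y i} := by
    intro y
    have h : ({y} : Set (Fin n → X)) = Set.pi Set.univ fun i => {y i} := by
      ext u; simp [funext_iff, Set.mem_pi, eq_comm]
    rw [hμdef, h, Measure.pi_pi]
  have hsing : ∀ ω : (Fin n → X) × (Fin n → X), ν {ω} = ∏ i, (P {ω.1 i} * P {ω.2 i}) := by
    rintro ⟨x, z⟩
    rw [hνdef, ← Set.singleton_prod_singleton, Measure.prod_prod, hμsing, hμsing,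
      ← Finset.prod_mul_distrib]
  have hswap_sing : ∀ (σ : Fin n → Bool) ω, ν {swapT n σ ω} = ν {ω} := by
    intro σ ω
    rw [hsing, hsing]
    refine Finset.prod_congr rfl fun i _ => ?_
    by_cases h : σ i <;> simp [swapT, h, mul_comm]
  have hAm : MeasurableSet A := (Set.to_countable A).measurableSet
  have hrepr : ∀ σ : Fin n → Bool,
      ν A = ∑' ω, (if swapT n σ ω ∈ A then ν {ω} else 0) := by
    intro σ
    rw [← ν.tsum_indicator_apply_singleton A hAm,
      ← Equiv.tsum_eq ((swapT_invol (X := X) n σ).toPerm)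
        (fun ω => A.indicator (fun ω' => ν {ω'}) ω)]
    refine tsum_congr fun ω => ?_
    simp only [Set.indicator_apply, Function.Involutive.coe_toPerm]
    by_cases h : swapT n σ ω ∈ A <;> simp [h, hswap_sing σ ω]
  have hsum : ((2 ^ n : ℕ) : ℝ≥0∞) * ν A
      = ∑' ω, ((Finset.univ.filter fun σ : Fin n → Bool => swapT n σ ω ∈ A).card : ℝ≥0∞) * ν {ω} := by
    calc ((2 ^ n : ℕ) : ℝ≥0∞) * ν A = ∑ _σ : Fin n → Bool, ν A := by
          rw [Finset.sum_const, nsmul_eq_mul]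
          congr 2
          simp [Finset.card_univ]
      _ = ∑ σ : Fin n → Bool, ∑' ω, (if swapT n σ ω ∈ A then ν {ω} else 0) :=
          Finset.sum_congr rfl fun σ _ => hrepr σ
      _ = ∑' ω, ∑ σ : Fin n → Bool, (if swapT n σ ω ∈ A then ν {ω} else 0) :=
          (Summable.tsum_finsetSum fun i _ => ENNReal.summable).symm
      _ = _ := by
          refine tsum_congr fun ω => ?_
          rw [Finset.sum_ite, Finset.sum_const, Finset.sum_const_zero, add_zero, nsmul_eq_mul]
  set R : ℝ := (growth G (2 * n) : ℝ) * ((2 ^ n : ℕ) : ℝ) * (2 : ℝ) ^ (-(ε * n)) with hR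
  have hR0 : 0 ≤ R := by rw [hR]; positivity
  have hbound : ∀ ω : (Fin n → X) × (Fin n → X),
      ((Finset.univ.filter fun σ : Fin n → Bool => swapT n σ ω ∈ A).card : ℝ≥0∞) * ν {ω}
        ≤ ENNReal.ofReal R * ν {ω} := by
    rintro ⟨x, z⟩
    refine mul_le_mul_left ?_ _
    rw [← ENNReal.ofReal_natCast]
    refine ENNReal.ofReal_le_ofReal ?_
    have hcc := core_count (X := X) hn G hε x z
    rw [hR]
    refine le_trans (le_of_eq ?_) hcc
    congr 2
  have htot : (∑' ω : (Fin n → X) × (Fin n → X), ENNReal.ofReal R * ν {ω})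
      = ENNReal.ofReal R := by
    rw [ENNReal.tsum_mul_left]
    have h1 : (∑' ω : (Fin n → X) × (Fin n → X), ν {ω}) = 1 := by
      have := ν.tsum_indicator_apply_singleton Set.univ MeasurableSet.univ
      simp only [Set.indicator_univ] at this
      rw [this]
      exact measure_univ
    rw [h1, mul_one]
  have hfin : ((2 ^ n : ℕ) : ℝ≥0∞) * ν A ≤ ENNReal.ofReal R := by
    rw [hsum]
    exact le_of_le_of_eq (ENNReal.tsum_le_tsum hbound) htot
  have h2 : ((2 ^ n : ℕ) : ℝ) * (ν A).toReal ≤ R := by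
    have := ENNReal.toReal_le_of_le_ofReal hR0 hfin
    rwa [ENNReal.toReal_mul, ENNReal.toReal_natCast] at this
  have hpow : (0 : ℝ) < ((2 ^ n : ℕ) : ℝ) := by positivity
  rw [hR] at h2
  nlinarith [h2, hpow]
end

section
/- For any n ∈ ℕ, any probability distribution P on a countable domain X, any family G of binary classifiers g : X → {0,1}, any ε > 0, and any α > 0: the probability over independent samples x ∼ P^n and z ∼ P^n that there exists g ∈ G with (1/n)·Σ_{i∈[n]} g(z_i) ≥ ((1+α)/n)·Σ_{i∈[n]} g(x_i) + ε is at most Π_G[2n]·exp(−(2α/(2+α)²)·εn). -/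
open MeasureTheory
open scoped ENNReal

private lemma ncard_setOf_eq_card_filter {n : ℕ} (p : Fin n → Prop) [DecidablePred p] :
    {i : Fin n | p i}.ncard = (Finset.univ.filter p).card := by
  rw [← Set.ncard_coe_finset]
  congr 1
  ext i
  simp

private lemma key_exp_ineq {a l : ℝ} (ha : 0 < a) (hl : l = 2 * a / (2 + a) ^ 2) :
    Real.exp l + Real.exp (-(l * (1 + a))) ≤ 2 := by
  have hd : (0:ℝ) < (2 + a) ^ 2 := by positivity
  have hdne : (2 + a) ≠ 0 := by nlinarith
  have hl0 : 0 < l := by rw [hl]; positivity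
  have hl1 : l < 1 := by rw [hl, div_lt_one hd]; nlinarith
  have h1 : Real.exp l ≤ 1 / (1 - l) := by
    rw [le_div_iff₀ (by linarith)]
    have h := Real.add_one_le_exp (-l)
    calc Real.exp l * (1 - l) ≤ Real.exp l * Real.exp (-l) := by
          apply mul_le_mul_of_nonneg_left _ (Real.exp_nonneg l); linarith
      _ = 1 := by rw [← Real.exp_add]; simp
  have h2 : Real.exp (-(l * (1 + a))) ≤ 1 / (1 + l * (1 + a)) := by
    rw [le_div_iff₀ (by nlinarith)]
    have h := Real.add_one_le_exp (l * (1 + a))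
    calc Real.exp (-(l * (1 + a))) * (1 + l * (1 + a))
        ≤ Real.exp (-(l * (1 + a))) * Real.exp (l * (1 + a)) := by
          apply mul_le_mul_of_nonneg_left _ (Real.exp_nonneg _); linarith
      _ = 1 := by rw [← Real.exp_add]; simp
  have hA : (0:ℝ) < 4 + 2 * a + a ^ 2 := by nlinarith
  have hB : (0:ℝ) < 4 + 6 * a + 3 * a ^ 2 := by nlinarith
  have e1 : 1 - l = (4 + 2 * a + a ^ 2) / (2 + a) ^ 2 := by
    rw [hl]; field_simp; ring
  have e2 : 1 + l * (1 + a) = (4 + 6 * a + 3 * a ^ 2) / (2 + a) ^ 2 := by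
    rw [hl]; field_simp; ring
  have h3 : 1 / (1 - l) + 1 / (1 + l * (1 + a)) ≤ 2 := by
    rw [e1, e2, one_div_div, one_div_div, div_add_div _ _ hA.ne' hB.ne',
      div_le_iff₀ (by positivity)]
    nlinarith [pow_pos ha 4]
  linarith

private lemma chernoff {n : ℕ} {l t : ℝ} (hl : 0 ≤ l) (u : Fin n → Bool → ℝ)
    (hu : ∀ i, Real.exp (l * u i false) + Real.exp (l * u i true) ≤ 2) :
    ((Finset.univ.filter (fun σ : Fin n → Bool => t ≤ ∑ i, u i (σ i))).card : ℝ)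
      ≤ 2 ^ n * Real.exp (-(l * t)) := by
  classical
  set S := Finset.univ.filter (fun σ : Fin n → Bool => t ≤ ∑ i, u i (σ i)) with hS
  have h1 : (S.card : ℝ) * Real.exp (l * t)
      ≤ ∑ σ : Fin n → Bool, Real.exp (l * ∑ i, u i (σ i)) := by
    calc (S.card : ℝ) * Real.exp (l * t) = ∑ _σ ∈ S, Real.exp (l * t) := by
          rw [Finset.sum_const, nsmul_eq_mul]
      _ ≤ ∑ σ ∈ S, Real.exp (l * ∑ i, u i (σ i)) := by
          apply Finset.sum_le_sum
          intro σ hσ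
          exact Real.exp_le_exp.2
            (mul_le_mul_of_nonneg_left (Finset.mem_filter.1 hσ).2 hl)
      _ ≤ ∑ σ : Fin n → Bool, Real.exp (l * ∑ i, u i (σ i)) := by
          apply Finset.sum_le_sum_of_subset_of_nonneg (Finset.filter_subset _ _)
          intro σ _ _
          exact (Real.exp_pos _).le
  have h2 : ∑ σ : Fin n → Bool, Real.exp (l * ∑ i, u i (σ i)) ≤ 2 ^ n := by
    have he : ∀ σ : Fin n → Bool,
        Real.exp (l * ∑ i, u i (σ i)) = ∏ i, Real.exp (l * u i (σ i)) := by
      intro σ; rw [Finset.mul_sum, Real.exp_sum]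
    simp_rw [he]
    have hps := Finset.prod_univ_sum (κ := fun _ : Fin n => Bool)
      (fun _ => (Finset.univ : Finset Bool)) (fun i s => Real.exp (l * u i s))
    rw [Fintype.piFinset_univ] at hps
    rw [← hps]
    calc ∏ i, ∑ s : Bool, Real.exp (l * u i s) ≤ ∏ _i : Fin n, (2:ℝ) := by
          apply Finset.prod_le_prod
          · intro i _; positivity
          · intro i _
            simpa [Fintype.sum_bool, add_comm] using hu i
      _ = 2 ^ n := by simp
  rw [Real.exp_neg, ← div_eq_mul_inv, le_div_iff₀ (Real.exp_pos _)]
  exact h1.trans h2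

private lemma pair_ncard_le_growth {X : Type*} (G : Set (X → Bool)) {n : ℕ}
    (x z : Fin n → X) :
    Set.ncard {p : (Fin n → Bool) × (Fin n → Bool) |
        ∃ g ∈ G, p = (fun i => g (x i), fun i => g (z i))} ≤ growth G (2 * n) := by
  classical
  set w : Fin (2 * n) → X := fun j =>
    if h : (j : ℕ) < n then x ⟨j, h⟩ else z ⟨(j : ℕ) - n, by have := j.isLt; omega⟩ with hw
  set V : Set (Fin (2 * n) → Bool) := {v | ∃ g ∈ G, v = fun i => g (w i)} with hV
  set Φ : (Fin (2 * n) → Bool) → (Fin n → Bool) × (Fin n → Bool) := fun v =>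
    (fun i => v ⟨i, by have := i.isLt; omega⟩,
     fun i => v ⟨n + i, by have := i.isLt; omega⟩) with hΦ
  have hsub : {p : (Fin n → Bool) × (Fin n → Bool) |
      ∃ g ∈ G, p = (fun i => g (x i), fun i => g (z i))} ⊆ Φ '' V := by
    rintro p ⟨g, hg, rfl⟩
    refine ⟨fun i => g (w i), ⟨g, hg, rfl⟩, ?_⟩
    refine Prod.ext ?_ ?_ <;> funext i <;> simp only [hΦ, hw]
    · have hi : (i : ℕ) < n := i.isLt
      simp [hi]
    · have hi : ¬ (n + (i : ℕ) < n) := by omega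
      simp [hi, Nat.add_sub_cancel_left]
  calc Set.ncard {p : (Fin n → Bool) × (Fin n → Bool) |
        ∃ g ∈ G, p = (fun i => g (x i), fun i => g (z i))}
      ≤ (Φ '' V).ncard := Set.ncard_le_ncard hsub ((Set.toFinite V).image _)
    _ ≤ V.ncard := Set.ncard_image_le (Set.toFinite V)
    _ ≤ growth G (2 * n) := by
        have hbdd : BddAbove (Set.range fun w' : Fin (2 * n) → X =>
            Set.ncard {v : Fin (2 * n) → Bool | ∃ g ∈ G, v = fun i => g (w' i)}) := by
          refine ⟨Nat.card (Fin (2 * n) → Bool), ?_⟩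
          rintro _ ⟨w', rfl⟩
          rw [← Set.ncard_univ]
          exact Set.ncard_le_ncard (Set.subset_univ _) Set.finite_univ
        exact le_ciSup hbdd w

/-- For any `n`, distribution `P` on countable `X`, family `G`, `ε > 0`,
`α > 0`: the probability over `x ∼ Pⁿ`, `z ∼ Pⁿ` that some `g ∈ G` has
`(1/n)·Σ g(z_i) ≥ ((1+α)/n)·Σ g(x_i) + ε` is at most
`Π_G[2n]·exp(−(2α/(2+α)²)·εn)`. -/
theorem stmt4 {X : Type*} [Countable X] [MeasurableSpace X] [MeasurableSingletonClass X]
    (n : ℕ) (P : Measure X) [IsProbabilityMeasure P]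
    (G : Set (X → Bool)) (ε α : ℝ) (hε : 0 < ε) (hα : 0 < α) :
    (((Measure.pi fun _ : Fin n => P).prod (Measure.pi fun _ : Fin n => P))
      {ω : (Fin n → X) × (Fin n → X) | ∃ g ∈ G,
        ((1 + α) / n) * (Set.ncard {i : Fin n | g (ω.1 i) = true} : ℝ) + ε ≤
          (Set.ncard {i : Fin n | g (ω.2 i) = true} : ℝ) / n}).toReal ≤
      (growth G (2 * n) : ℝ) * Real.exp (-(2 * α / (2 + α) ^ 2 * (ε * n))) := by
  classical
  rcases Nat.eq_zero_or_pos n with hn0 | hn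
  · subst hn0
    have hempty : {ω : (Fin 0 → X) × (Fin 0 → X) | ∃ g ∈ G,
        ((1 + α) / (0:ℕ)) * (Set.ncard {i : Fin 0 | g (ω.1 i) = true} : ℝ) + ε ≤
          (Set.ncard {i : Fin 0 | g (ω.2 i) = true} : ℝ) / (0:ℕ)} = ∅ := by
      rw [Set.eq_empty_iff_forall_notMem]
      rintro ω ⟨g, hg, hle⟩
      rw [Set.eq_empty_of_isEmpty {i : Fin 0 | g (ω.1 i) = true},
        Set.eq_empty_of_isEmpty {i : Fin 0 | g (ω.2 i) = true}] at hle
      simp at hle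
      linarith
    rw [hempty, measure_empty]
    simp only [ENNReal.toReal_zero]
    positivity
  -- main case
  have hn' : (0:ℝ) < n := by exact_mod_cast hn
  set l : ℝ := 2 * α / (2 + α) ^ 2 with hl
  have hl0 : 0 ≤ l := by
    rw [hl]; apply div_nonneg (by linarith) (by positivity)
  set μ : Measure (Fin n → X) := Measure.pi fun _ : Fin n => P with hμ
  set ν : Measure ((Fin n → X) × (Fin n → X)) := μ.prod μ with hν
  set A : Set ((Fin n → X) × (Fin n → X)) := {ω | ∃ g ∈ G,
      ((1 + α) / n) * (Set.ncard {i : Fin n | g (ω.1 i) = true} : ℝ) + ε ≤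
        (Set.ncard {i : Fin n | g (ω.2 i) = true} : ℝ) / n} with hA
  set m : ((Fin n → X) × (Fin n → X)) → ℝ≥0∞ := fun ω => ν {ω} with hm
  set T : (Fin n → Bool) → ((Fin n → X) × (Fin n → X)) → ((Fin n → X) × (Fin n → X)) :=
    fun σ ω => (fun i => if σ i then ω.2 i else ω.1 i,
                fun i => if σ i then ω.1 i else ω.2 i) with hT
  have hTT : ∀ σ ω, T σ (T σ ω) = ω := by
    intro σ ω
    refine Prod.ext ?_ ?_ <;> funext i <;> by_cases h : σ i <;> simp [hT, h]
  have hsing : ∀ ω : (Fin n → X) × (Fin n → X), m ω = ∏ i, (P {ω.1 i} * P {ω.2 i}) := by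
    rintro ⟨x, z⟩
    rw [hm]
    simp only
    rw [show ({(x, z)} : Set ((Fin n → X) × (Fin n → X))) = {x} ×ˢ {z} from
      (Set.singleton_prod_singleton).symm, hν, Measure.prod_prod, hμ,
      show ({x} : Set (Fin n → X)) = Set.pi Set.univ (fun i => {x i}) from
        (Set.univ_pi_singleton x).symm,
      show ({z} : Set (Fin n → X)) = Set.pi Set.univ (fun i => {z i}) from
        (Set.univ_pi_singleton z).symm,
      Measure.pi_pi, Measure.pi_pi, ← Finset.prod_mul_distrib]
  have hmT : ∀ σ ω, m (T σ ω) = m ω := by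
    intro σ ω
    rw [hsing, hsing]
    refine Finset.prod_congr rfl fun i _ => ?_
    by_cases h : σ i <;> simp [hT, h, mul_comm]
  have key1 : ∀ S : Set ((Fin n → X) × (Fin n → X)), ν S = ∑' ω, S.indicator m ω :=
    fun S => (Measure.tsum_indicator_apply_singleton ν S (S.to_countable.measurableSet)).symm
  have hσmeas : ∀ σ, ν (T σ ⁻¹' A) = ν A := by
    intro σ
    rw [key1 (T σ ⁻¹' A), key1 A]
    calc ∑' ω, (T σ ⁻¹' A).indicator m ω = ∑' ω, A.indicator m (T σ ω) := by
          refine tsum_congr fun ω => ?_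
          by_cases h : T σ ω ∈ A <;>
            simp [Set.indicator_apply, h, hmT σ ω]
      _ = ∑' ω, A.indicator m ω :=
          Equiv.tsum_eq ⟨T σ, T σ, fun ω => hTT σ ω, fun ω => hTT σ ω⟩ (A.indicator m)
  -- the count of bad swaps
  set N : ((Fin n → X) × (Fin n → X)) → ℕ :=
    fun ω => (Finset.univ.filter (fun σ : Fin n → Bool => T σ ω ∈ A)).card with hN
  set BR : ℝ := (growth G (2 * n) : ℝ) * (2 ^ n * Real.exp (-(l * (ε * n)))) with hBR
  have stepB : ∀ ω, (N ω : ℝ) ≤ BR := by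
    rintro ⟨x, z⟩
    set V' : Set ((Fin n → Bool) × (Fin n → Bool)) :=
      {p | ∃ g ∈ G, p = (fun i => g (x i), fun i => g (z i))} with hV'
    have hV'fin : V'.Finite := Set.toFinite _
    set F : Finset ((Fin n → Bool) × (Fin n → Bool)) := hV'fin.toFinset with hF
    set U : ((Fin n → Bool) × (Fin n → Bool)) → Fin n → Bool → ℝ := fun p i s =>
      (if (if s = true then p.1 i else p.2 i) = true then (1:ℝ) else 0) -
        (1 + α) * (if (if s = true then p.2 i else p.1 i) = true then (1:ℝ) else 0) with hU
    have hsub : Finset.univ.filter (fun σ : Fin n → Bool => T σ (x, z) ∈ A) ⊆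
        F.biUnion (fun p => Finset.univ.filter
          (fun σ : Fin n → Bool => ε * n ≤ ∑ i, U p i (σ i))) := by
      intro σ hσ
      rw [Finset.mem_filter] at hσ
      obtain ⟨-, hσA⟩ := hσ
      rw [hA, Set.mem_setOf_eq] at hσA
      obtain ⟨g, hg, hle⟩ := hσA
      set p : (Fin n → Bool) × (Fin n → Bool) :=
        (fun i => g (x i), fun i => g (z i)) with hp
      have hCx : (Set.ncard {i : Fin n | g ((T σ (x, z)).1 i) = true} : ℝ) =
          ∑ i, (if (if σ i = true then p.2 i else p.1 i) = true then (1:ℝ) else 0) := by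
        rw [ncard_setOf_eq_card_filter, Finset.card_filter]
        push_cast
        refine Finset.sum_congr rfl fun i _ => ?_
        by_cases h : σ i <;> simp [hT, hp, h]
      have hCz : (Set.ncard {i : Fin n | g ((T σ (x, z)).2 i) = true} : ℝ) =
          ∑ i, (if (if σ i = true then p.1 i else p.2 i) = true then (1:ℝ) else 0) := by
        rw [ncard_setOf_eq_card_filter, Finset.card_filter]
        push_cast
        refine Finset.sum_congr rfl fun i _ => ?_
        by_cases h : σ i <;> simp [hT, hp, h]
      rw [hCx, hCz] at hle
      have harith : ε * n ≤ ∑ i, U p i (σ i) := by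
        have hmul := mul_le_mul_of_nonneg_right hle hn'.le
        have hc1 : ((1 + α) / n *
            (∑ i, (if (if σ i = true then p.2 i else p.1 i) = true then (1:ℝ) else 0)) + ε) * n
            = (1 + α) * (∑ i, (if (if σ i = true then p.2 i else p.1 i) = true then (1:ℝ) else 0))
              + ε * n := by
          first
          | (field_simp; ring)
          | field_simp
        have hc2 : (∑ i, (if (if σ i = true then p.1 i else p.2 i) = true then (1:ℝ) else 0)) / n * n
            = ∑ i, (if (if σ i = true then p.1 i else p.2 i) = true then (1:ℝ) else 0) := by
          field_simp
        rw [hc1, hc2] at hmul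
        have hsum : ∑ i, U p i (σ i) =
            (∑ i, (if (if σ i = true then p.1 i else p.2 i) = true then (1:ℝ) else 0)) -
              (1 + α) * (∑ i, (if (if σ i = true then p.2 i else p.1 i) = true then (1:ℝ) else 0)) := by
          rw [Finset.mul_sum, ← Finset.sum_sub_distrib]
        rw [hsum]
        linarith
      refine Finset.mem_biUnion.2 ⟨p, ?_, ?_⟩
      · rw [hF, Set.Finite.mem_toFinset, hV']
        exact ⟨g, hg, rfl⟩
      · exact Finset.mem_filter.2 ⟨Finset.mem_univ _, harith⟩
    have hchern : ∀ p : (Fin n → Bool) × (Fin n → Bool),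
        ((Finset.univ.filter (fun σ : Fin n → Bool => ε * n ≤ ∑ i, U p i (σ i))).card : ℝ)
          ≤ 2 ^ n * Real.exp (-(l * (ε * n))) := by
      intro p
      apply chernoff hl0
      intro i
      have hUf : U p i false = (if p.2 i = true then (1:ℝ) else 0) -
          (1 + α) * (if p.1 i = true then (1:ℝ) else 0) := by simp [hU]
      have hUt : U p i true = (if p.1 i = true then (1:ℝ) else 0) -
          (1 + α) * (if p.2 i = true then (1:ℝ) else 0) := by simp [hU]
      have hkey := key_exp_ineq hα hl
      cases h1 : p.1 i <;> cases h2 : p.2 i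
      · have hv0 : U p i false = 0 := by simp [hU, h1, h2]
        have hv1 : U p i true = 0 := by simp [hU, h1, h2]
        rw [hv0, hv1, mul_zero, Real.exp_zero]
        norm_num
      · have hv0 : U p i false = 1 := by simp [hU, h1, h2]
        have hv1 : U p i true = -(1 + α) := by simp [hU, h1, h2]
        rw [hv0, hv1, mul_one, show l * -(1 + α) = -(l * (1 + α)) from by ring]
        exact hkey
      · have hv0 : U p i false = -(1 + α) := by simp [hU, h1, h2]
        have hv1 : U p i true = 1 := by simp [hU, h1, h2]
        rw [hv0, hv1, mul_one, show l * -(1 + α) = -(l * (1 + α)) from by ring]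
        linarith
      · have hv0 : U p i false = -α := by first | (simp [hU, h1, h2]; ring) | simp [hU, h1, h2]
        have hv1 : U p i true = -α := by first | (simp [hU, h1, h2]; ring) | simp [hU, h1, h2]
        rw [hv0, hv1]
        have hle1 : Real.exp (l * -α) ≤ 1 := Real.exp_le_one_iff.2 (by nlinarith)
        linarith
    have hcount : (N (x, z) : ℝ) ≤ (F.card : ℝ) * (2 ^ n * Real.exp (-(l * (ε * n)))) := by
      have h1 : N (x, z) ≤ ∑ p ∈ F, (Finset.univ.filter
          (fun σ : Fin n → Bool => ε * n ≤ ∑ i, U p i (σ i))).card :=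
        le_trans (Finset.card_le_card hsub) (Finset.card_biUnion_le)
      calc (N (x, z) : ℝ) ≤ ∑ p ∈ F, ((Finset.univ.filter
            (fun σ : Fin n → Bool => ε * n ≤ ∑ i, U p i (σ i))).card : ℝ) := by
            exact_mod_cast h1
        _ ≤ ∑ _p ∈ F, (2 ^ n * Real.exp (-(l * (ε * n)))) :=
            Finset.sum_le_sum fun p _ => hchern p
        _ = (F.card : ℝ) * (2 ^ n * Real.exp (-(l * (ε * n)))) := by
            rw [Finset.sum_const, nsmul_eq_mul]
    have hFcard : (F.card : ℝ) ≤ (growth G (2 * n) : ℝ) := by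
      have hple := pair_ncard_le_growth G x z
      rw [Set.ncard_eq_toFinset_card V' hV'fin] at hple
      exact_mod_cast hple
    calc (N (x, z) : ℝ) ≤ (F.card : ℝ) * (2 ^ n * Real.exp (-(l * (ε * n)))) := hcount
      _ ≤ BR := by
          rw [hBR]
          apply mul_le_mul_of_nonneg_right hFcard
          positivity
  -- step A : symmetrization
  have hpoint : ∀ ω, ∑ σ : Fin n → Bool, (T σ ⁻¹' A).indicator m ω = (N ω : ℝ≥0∞) * m ω := by
    intro ω
    have : ∀ σ : Fin n → Bool, (T σ ⁻¹' A).indicator m ω =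
        if T σ ω ∈ A then m ω else 0 := by
      intro σ
      simp [Set.indicator_apply, Set.mem_preimage]
    simp_rw [this]
    rw [← Finset.sum_filter, Finset.sum_const, nsmul_eq_mul, hN]
  have hBRnn : 0 ≤ (growth G (2 * n) : ℝ) * Real.exp (-(l * (ε * n))) := by positivity
  have main : (2 ^ n : ℝ≥0∞) * ν A ≤ (2 ^ n : ℝ≥0∞) *
      ENNReal.ofReal ((growth G (2 * n) : ℝ) * Real.exp (-(l * (ε * n)))) := by
    have hcard2 : ((Finset.univ : Finset (Fin n → Bool)).card : ℝ≥0∞) = 2 ^ n := by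
      simp
    calc (2 ^ n : ℝ≥0∞) * ν A = ∑ _σ : Fin n → Bool, ν A := by
          rw [Finset.sum_const, nsmul_eq_mul, hcard2]
      _ = ∑ σ : Fin n → Bool, ν (T σ ⁻¹' A) := by
          exact Finset.sum_congr rfl fun σ _ => (hσmeas σ).symm
      _ = ∑ σ : Fin n → Bool, ∑' ω, (T σ ⁻¹' A).indicator m ω :=
          Finset.sum_congr rfl fun σ _ => key1 _
      _ = ∑' ω, ∑ σ : Fin n → Bool, (T σ ⁻¹' A).indicator m ω :=
          (Summable.tsum_finsetSum fun _ _ => ENNReal.summable).symm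
      _ = ∑' ω, (N ω : ℝ≥0∞) * m ω := tsum_congr hpoint
      _ ≤ ∑' ω, ENNReal.ofReal BR * m ω := by
          apply ENNReal.tsum_le_tsum
          intro ω
          apply mul_le_mul_left
          calc (N ω : ℝ≥0∞) = ENNReal.ofReal ((N ω : ℝ)) := by
                rw [ENNReal.ofReal_natCast]
            _ ≤ ENNReal.ofReal BR := ENNReal.ofReal_le_ofReal (stepB ω)
      _ = ENNReal.ofReal BR * ∑' ω, m ω := ENNReal.tsum_mul_left
      _ = ENNReal.ofReal BR := by
          have huniv : ∑' ω, m ω = ν Set.univ := by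
            rw [key1 Set.univ]
            simp [Set.indicator_univ]
          rw [huniv, measure_univ, mul_one]
      _ = (2 ^ n : ℝ≥0∞) * ENNReal.ofReal
            ((growth G (2 * n) : ℝ) * Real.exp (-(l * (ε * n)))) := by
          rw [hBR, show (growth G (2 * n) : ℝ) * (2 ^ n * Real.exp (-(l * (ε * n)))) =
            (2:ℝ) ^ n * ((growth G (2 * n) : ℝ) * Real.exp (-(l * (ε * n)))) from by ring,
            ENNReal.ofReal_mul (by positivity), ENNReal.ofReal_pow (by norm_num)]
          norm_num
  have hfinal : ν A ≤ ENNReal.ofReal ((growth G (2 * n) : ℝ) * Real.exp (-(l * (ε * n)))) := by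
    rw [← ENNReal.mul_le_mul_iff_right (a := (2 ^ n : ℝ≥0∞)) (by positivity)
      (by exact ENNReal.pow_ne_top ENNReal.ofNat_ne_top)]
    exact main
  have := ENNReal.toReal_le_of_le_ofReal hBRnn hfinal
  calc (ν A).toReal ≤ (growth G (2 * n) : ℝ) * Real.exp (-(l * (ε * n))) := this
    _ = (growth G (2 * n) : ℝ) * Real.exp (-(2 * α / (2 + α) ^ 2 * (ε * n))) := by rw [hl]
end

section
/- Let C be a class of binary classifiers on a countable domain X with VC dimension d ≥ 2, let P be a probability distribution on X, let T, n ∈ ℕ with n ≥ 1, let δ ∈ (0,1], and set ε := (1/n)·(d(T+1)·log₂(2n) + log₂(1/δ)). Then the probability over independent samples x ∼ P^n and z ∼ P^n that there exist h ∈ C and c = (c_1,…,c_T) ∈ C^T with rej_x(S(h,c)) = 0 and rej_z(S(h,c)) > ε is at most δ. -/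
open MeasureTheory
open scoped ENNReal

/-- A finite set `A` is shattered by `C` if every boolean labeling of `A` is
realized by some member of `C`. -/
def Shatters {X : Type*} (C : Set (X → Bool)) (A : Finset X) : Prop :=
  ∀ b : X → Bool, ∃ g ∈ C, ∀ a ∈ A, g a = b a

/-- `C` has VC dimension `d`: some set of size `d` is shattered and no larger set is. -/
def VCDim {X : Type*} (C : Set (X → Bool)) (d : ℕ) : Prop :=
  (∃ A : Finset X, A.card = d ∧ Shatters C A) ∧ ∀ A : Finset X, Shatters C A → A.card ≤ d

lemma aux_sum_choose_le (m d : ℕ) (hm : 2 ≤ m) (hd : 2 ≤ d) :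
    ∑ i ∈ Finset.range (d + 1), m.choose i ≤ m ^ d := by
  induction d with
  | zero => omega
  | succ k ih =>
    rcases Nat.lt_or_ge k 2 with hk | hk
    · have hk1 : k = 1 := by omega
      subst hk1
      obtain ⟨j, rfl⟩ : ∃ j, m = j + 2 := ⟨m - 2, by omega⟩
      have h2 : (j + 2).choose 2 * 2 = (j + 2) * (j + 1) := by
        rw [Nat.choose_two_right]
        have he : j + 2 - 1 = j + 1 := by omega
        rw [he]
        have hev : 2 ∣ (j + 2) * (j + 1) := by
          have h' : (j + 2) * (j + 1) = (j + 1) * ((j + 1) + 1) := by ring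
          rw [h']
          exact (Nat.even_mul_succ_self (j + 1)).two_dvd
        rw [Nat.div_mul_cancel hev]
      have hsum : ∑ i ∈ Finset.range 3, (j + 2).choose i = 1 + (j + 2) + (j + 2).choose 2 := by
        simp [Finset.sum_range_succ]
      rw [hsum]
      have hexp : (j + 2) ^ (1 + 1) = (j + 2) * (j + 2) := by ring
      nlinarith [h2, hexp]
    · have ih2 := ih (by omega)
      rw [Finset.sum_range_succ]
      have hc6 : m.choose (k + 1) * 6 ≤ m ^ (k + 1) := by
        calc m.choose (k + 1) * 6 ≤ m.choose (k + 1) * Nat.factorial (k + 1) := by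
              refine Nat.mul_le_mul_left _ ?_
              calc (6 : ℕ) = Nat.factorial 3 := by decide
                _ ≤ Nat.factorial (k + 1) := Nat.factorial_le (by omega)
          _ = m.descFactorial (k + 1) := by
              rw [Nat.descFactorial_eq_factorial_mul_choose]; ring
          _ ≤ m ^ (k + 1) := Nat.descFactorial_le_pow m (k + 1)
      have e1 : m ^ (k + 1) = m ^ k * m := pow_succ m k
      have h3 : m ^ k * 6 ≤ m ^ k * (3 * m) := Nat.mul_le_mul_left _ (by omega)
      nlinarith [ih2, hc6, h3, e1]

open Finset in
lemma aux_class_card {X : Type*} [DecidableEq X] (C : Set (X → Bool)) (d : ℕ)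
    (hC : ∀ A : Finset X, Shatters C A → A.card ≤ d) (A : Finset X)
    (𝒜 : Finset (Finset X))
    (h𝒜 : ∀ s ∈ 𝒜, s ⊆ A ∧ ∃ g ∈ C, ∀ a ∈ A, (g a = true ↔ a ∈ s)) :
    𝒜.card ≤ ∑ i ∈ Finset.range (d + 1), A.card.choose i := by
  calc 𝒜.card ≤ 𝒜.shatterer.card := Finset.card_le_card_shatterer 𝒜
    _ ≤ ((range (d + 1)).biUnion (fun i => A.powersetCard i)).card := by
        refine card_le_card ?_
        intro B hB
        rw [mem_shatterer] at hB
        have hBA : B ⊆ A := by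
          obtain ⟨u, hu, huB⟩ := hB (Finset.Subset.refl B)
          have hBu : B ⊆ u := Finset.inter_eq_left.mp huB
          exact hBu.trans (h𝒜 u hu).1
        have hShat : Shatters C B := by
          intro b
          have ht : B.filter (fun a => b a = true) ⊆ B := filter_subset _ _
          obtain ⟨u, hu, hBu⟩ := hB ht
          obtain ⟨-, g, hgC, hg⟩ := h𝒜 u hu
          refine ⟨g, hgC, fun a ha => ?_⟩
          have haA : a ∈ A := hBA ha
          have h1 : g a = true ↔ a ∈ u := hg a haA
          have h2 : a ∈ u ↔ b a = true := by
            constructor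
            · intro hau
              have : a ∈ B ∩ u := mem_inter.mpr ⟨ha, hau⟩
              rw [hBu, mem_filter] at this
              exact this.2
            · intro hba
              have : a ∈ B.filter (fun a => b a = true) := mem_filter.mpr ⟨ha, hba⟩
              rw [← hBu, mem_inter] at this
              exact this.2
          have := h1.trans h2
          exact Bool.coe_iff_coe.mp this
        have hcard : B.card ≤ d := hC B hShat
        refine mem_biUnion.mpr ⟨B.card, mem_range.mpr (by omega), ?_⟩
        exact mem_powersetCard.mpr ⟨hBA, rfl⟩
    _ ≤ ∑ i ∈ range (d + 1), (A.powersetCard i).card := card_biUnion_le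
    _ = ∑ i ∈ Finset.range (d + 1), A.card.choose i := by
        refine Finset.sum_congr rfl fun i _ => ?_
        rw [card_powersetCard]

open Finset in
lemma aux_pattern_card {X : Type*} (C : Set (X → Bool)) (d : ℕ) (hd : 2 ≤ d)
    (hC : ∀ A : Finset X, Shatters C A → A.card ≤ d) (T n : ℕ) (hn : 1 ≤ n)
    (a : Fin n ⊕ Fin n → X) (Pats : Finset ((Fin n ⊕ Fin n) → Bool))
    (hPats : ∀ p ∈ Pats, ∃ h ∈ C, ∃ c : Fin T → X → Bool, (∀ j, c j ∈ C) ∧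
       ∀ i, p i = !decide (∀ j, c j (a i) = h (a i))) :
    Pats.card ≤ (2 * n) ^ (d * (T + 1)) := by
  classical
  set A : Finset X := Finset.image a Finset.univ with hA
  set 𝒜 : Finset (Finset X) :=
    A.powerset.filter (fun s => ∃ g ∈ C, ∀ x ∈ A, (g x = true ↔ x ∈ s)) with h𝒜def
  have hAcard : A.card ≤ 2 * n := by
    calc A.card ≤ (Finset.univ : Finset (Fin n ⊕ Fin n)).card := card_image_le
      _ = 2 * n := by simp [Fintype.card_sum]; ring
  have h𝒜card : 𝒜.card ≤ (2 * n) ^ d := by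
    have h1 : 𝒜.card ≤ ∑ i ∈ Finset.range (d + 1), A.card.choose i := by
      refine aux_class_card C d hC A 𝒜 fun s hs => ?_
      rw [h𝒜def, mem_filter, mem_powerset] at hs
      exact ⟨hs.1, hs.2⟩
    calc 𝒜.card ≤ ∑ i ∈ Finset.range (d + 1), A.card.choose i := h1
      _ ≤ ∑ i ∈ Finset.range (d + 1), (2 * n).choose i := by
          exact Finset.sum_le_sum fun i _ => Nat.choose_le_choose i hAcard
      _ ≤ (2 * n) ^ d := aux_sum_choose_le (2 * n) d (by omega) hd
  set F : Finset X × (Fin T → Finset X) → ((Fin n ⊕ Fin n) → Bool) :=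
    fun st => fun i => !decide (∀ j, decide (a i ∈ st.2 j) = decide (a i ∈ st.1)) with hF
  have hsub : Pats ⊆ (𝒜 ×ˢ Fintype.piFinset (fun _ : Fin T => 𝒜)).image F := by
    intro p hp
    obtain ⟨h, hhC, c, hcC, hpat⟩ := hPats p hp
    refine Finset.mem_image.mpr ⟨(A.filter (fun x => h x = true),
      fun j => A.filter (fun x => c j x = true)), ?_, ?_⟩
    · refine Finset.mem_product.mpr ⟨?_, ?_⟩
      · rw [h𝒜def, mem_filter, mem_powerset]
        exact ⟨filter_subset _ _, h, hhC, fun x hx => by simp [mem_filter, hx]⟩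
      · refine Fintype.mem_piFinset.mpr fun j => ?_
        rw [h𝒜def, mem_filter, mem_powerset]
        exact ⟨filter_subset _ _, c j, hcC j, fun x hx => by simp [mem_filter, hx]⟩
    · funext i
      rw [hpat i]
      simp only [hF]
      have haiA : a i ∈ A := mem_image.mpr ⟨i, mem_univ i, rfl⟩
      congr 1
      rw [decide_eq_decide]
      refine forall_congr' fun j => ?_
      have h1 : decide (a i ∈ A.filter (fun x => c j x = true)) = c j (a i) := by
        simp [mem_filter, haiA]
      have h2 : decide (a i ∈ A.filter (fun x => h x = true)) = h (a i) := by
        simp [mem_filter, haiA]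
      rw [h1, h2]
  calc Pats.card ≤ ((𝒜 ×ˢ Fintype.piFinset (fun _ : Fin T => 𝒜)).image F).card :=
        card_le_card hsub
    _ ≤ (𝒜 ×ˢ Fintype.piFinset (fun _ : Fin T => 𝒜)).card := card_image_le
    _ = 𝒜.card * 𝒜.card ^ T := by
        rw [Finset.card_product, Fintype.card_piFinset]
        simp
    _ = 𝒜.card ^ (T + 1) := by ring
    _ ≤ ((2 * n) ^ d) ^ (T + 1) := Nat.pow_le_pow_left h𝒜card (T + 1)
    _ = (2 * n) ^ (d * (T + 1)) := by rw [← pow_mul]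

open Finset in
lemma aux_forced_card (n : ℕ) (K : Finset (Fin n)) (g : Fin n → Bool) :
    (Finset.univ.filter (fun σ : Fin n → Bool => ∀ i ∈ K, σ i = g i)).card
      = 2 ^ (n - K.card) := by
  classical
  have hset : Finset.univ.filter (fun σ : Fin n → Bool => ∀ i ∈ K, σ i = g i)
      = Fintype.piFinset (fun i => if i ∈ K then {g i} else Finset.univ) := by
    ext σ
    simp only [Finset.mem_filter, Finset.mem_univ, true_and, Fintype.mem_piFinset]
    constructor
    · intro h i
      split_ifs with hi
      · simp [h i hi]
      · simp
    · intro h i hi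
      have := h i
      rw [if_pos hi] at this
      simpa using this
  rw [hset, Fintype.card_piFinset]
  calc ∏ i, (if i ∈ K then ({g i} : Finset Bool) else Finset.univ).card
      = ∏ i, (if i ∈ K then 1 else 2) := by
        refine Finset.prod_congr rfl fun i _ => ?_
        split_ifs <;> simp
    _ = (∏ i ∈ K, (if i ∈ K then 1 else 2)) * ∏ i ∈ Kᶜ, (if i ∈ K then 1 else 2) :=
        (Finset.prod_mul_prod_compl K _).symm
    _ = 1 * ∏ i ∈ Kᶜ, (2 : ℕ) := by
        congr 1
        · exact Finset.prod_eq_one fun i hi => if_pos hi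
        · exact Finset.prod_congr rfl fun i hi => if_neg (Finset.mem_compl.mp hi)
    _ = 2 ^ (n - K.card) := by
        rw [one_mul, Finset.prod_const, Finset.card_compl, Fintype.card_fin]
/-- for a class `C` of VC dimension `d ≥ 2`, distribution `P`, `T, n ∈ ℕ`
with `n ≥ 1`, `δ ∈ (0,1]`, and `ε = (1/n)(d(T+1)log₂(2n) + log₂(1/δ))`: the probability
over `x, z ∼ Pⁿ` that some `h ∈ C`, `c ∈ C^T` have `rej_x(S(h,c)) = 0` and
`rej_z(S(h,c)) > ε` is at most `δ`. Here `S(h,c) = {a | h(a)=c₁(a)=⋯=c_T(a)}`. -/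
theorem stmt6 {X : Type*} [Countable X] [MeasurableSpace X] [MeasurableSingletonClass X]
    (C : Set (X → Bool)) (d : ℕ) (hd : 2 ≤ d) (hC : VCDim C d)
    (P : Measure X) [IsProbabilityMeasure P] (T n : ℕ) (hn : 1 ≤ n)
    (δ : ℝ) (hδ0 : 0 < δ) (hδ1 : δ ≤ 1) (ε : ℝ)
    (hε : ε = (1 / (n : ℝ)) *
      ((d : ℝ) * ((T : ℝ) + 1) * Real.logb 2 (2 * n) + Real.logb 2 (1 / δ))) :
    (((Measure.pi fun _ : Fin n => P).prod (Measure.pi fun _ : Fin n => P))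
      {ω : (Fin n → X) × (Fin n → X) | ∃ h ∈ C, ∃ c : Fin T → X → Bool, (∀ i, c i ∈ C) ∧
        (Set.ncard {i : Fin n | ω.1 i ∉ {a : X | ∀ j, c j a = h a}} : ℝ) / n = 0 ∧
        ε < (Set.ncard {i : Fin n | ω.2 i ∉ {a : X | ∀ j, c j a = h a}} : ℝ) / n}).toReal
      ≤ δ := by
  classical
  have hn0 : (0:ℝ) < n := by exact_mod_cast Nat.pos_of_ne_zero (by omega)
  have h2n0 : (0:ℝ) < 2 * n := by linarith
  set μ := ((Measure.pi fun _ : Fin n => P).prod (Measure.pi fun _ : Fin n => P)) with hμdef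
  set E : Set ((Fin n → X) × (Fin n → X)) :=
    {ω | ∃ h ∈ C, ∃ c : Fin T → X → Bool, (∀ i, c i ∈ C) ∧
      (Set.ncard {i : Fin n | ω.1 i ∉ {a : X | ∀ j, c j a = h a}} : ℝ) / n = 0 ∧
      ε < (Set.ncard {i : Fin n | ω.2 i ∉ {a : X | ∀ j, c j a = h a}} : ℝ) / n} with hEdef
  -- measurability of E
  have hEmeas : MeasurableSet E := by
    have hpre : E = (fun ω : (Fin n → X) × (Fin n → X) => Sum.elim ω.1 ω.2) ⁻¹'
      {g : (Fin n ⊕ Fin n) → X | ∃ h ∈ C, ∃ c : Fin T → X → Bool, (∀ i, c i ∈ C) ∧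
        (Set.ncard {i : Fin n | g (Sum.inl i) ∉ {a : X | ∀ j, c j a = h a}} : ℝ) / n = 0 ∧
        ε < (Set.ncard {i : Fin n | g (Sum.inr i) ∉ {a : X | ∀ j, c j a = h a}} : ℝ) / n} := rfl
    have hf : Measurable (fun ω : (Fin n → X) × (Fin n → X) => Sum.elim ω.1 ω.2) := by
      refine measurable_pi_lambda _ fun i => ?_
      cases i with
      | inl i => exact (measurable_pi_apply i).comp measurable_fst
      | inr i => exact (measurable_pi_apply i).comp measurable_snd
    rw [hpre]
    exact hf ((Set.to_countable _).measurableSet)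
  -- the swap maps
  set sw : (Fin n → Bool) → (Fin n ⊕ Fin n) → (Fin n ⊕ Fin n) := fun σ =>
    Sum.elim (fun i => if σ i then Sum.inr i else Sum.inl i)
             (fun i => if σ i then Sum.inl i else Sum.inr i) with hsw
  have hswinv : ∀ σ, Function.Involutive (sw σ) := by
    intro σ i
    cases i with
    | inl i => by_cases hb : σ i <;> simp [hsw, hb]
    | inr i => by_cases hb : σ i <;> simp [hsw, hb]
  set perm : (Fin n → Bool) → (Fin n ⊕ Fin n) ≃ (Fin n ⊕ Fin n) :=
    fun σ => Function.Involutive.toPerm _ (hswinv σ) with hperm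
  have hpermapp : ∀ σ j, perm σ j = sw σ j := fun σ j => rfl
  set eqv : ((Fin n ⊕ Fin n) → X) ≃ᵐ (Fin n → X) × (Fin n → X) :=
    MeasurableEquiv.sumPiEquivProdPi (fun _ : Fin n ⊕ Fin n => X) with heqv
  set τ : (Fin n → Bool) → ((Fin n → X) × (Fin n → X)) → ((Fin n → X) × (Fin n → X)) :=
    fun σ => eqv ∘ (MeasurableEquiv.piCongrLeft (fun _ : Fin n ⊕ Fin n => X) (perm σ)) ∘ eqv.symm
    with hτ
  have hmp : ∀ σ, MeasurePreserving (τ σ) μ μ := by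
    intro σ
    have m1 : MeasurePreserving eqv (Measure.pi fun _ : Fin n ⊕ Fin n => P) μ :=
      measurePreserving_sumPiEquivProdPi (fun _ : Fin n ⊕ Fin n => P)
    have m2 : MeasurePreserving
        (MeasurableEquiv.piCongrLeft (fun _ : Fin n ⊕ Fin n => X) (perm σ))
        (Measure.pi fun _ : Fin n ⊕ Fin n => P) (Measure.pi fun _ : Fin n ⊕ Fin n => P) :=
      measurePreserving_piCongrLeft (fun _ : Fin n ⊕ Fin n => P) (perm σ)
    exact m1.comp (m2.comp (MeasurePreserving.symm eqv m1))
  -- explicit formula for the swap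
  have hτa : ∀ σ ω (i : Fin n ⊕ Fin n),
      Sum.elim (τ σ ω).1 (τ σ ω).2 i = Sum.elim ω.1 ω.2 (sw σ i) := by
    intro σ ω i
    have h2 : ∀ (f : (Fin n ⊕ Fin n) → X) (j : Fin n ⊕ Fin n),
        (MeasurableEquiv.piCongrLeft (fun _ : Fin n ⊕ Fin n => X) (perm σ)) f j
          = f (sw σ j) := by
      intro f j
      have hj : (perm σ) (sw σ j) = j := hswinv σ j
      conv_lhs => rw [← hj]
      rw [MeasurableEquiv.coe_piCongrLeft]
      exact Equiv.piCongrLeft_apply_apply _ _ _ _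
    have h1 : Sum.elim (τ σ ω).1 (τ σ ω).2 i
        = (MeasurableEquiv.piCongrLeft (fun _ : Fin n ⊕ Fin n => X) (perm σ)) (eqv.symm ω) i := by
      cases i <;> rfl
    rw [h1, h2 (eqv.symm ω) i]
    generalize sw σ i = j
    cases j <;> rfl
  have hτ1 : ∀ σ ω i, (τ σ ω).1 i = if σ i then ω.2 i else ω.1 i := by
    intro σ ω i
    have := hτa σ ω (Sum.inl i)
    simp only [Sum.elim_inl] at this
    rw [this, hsw]
    by_cases hb : σ i <;> simp [hb]
  have hτ2 : ∀ σ ω i, (τ σ ω).2 i = if σ i then ω.1 i else ω.2 i := by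
    intro σ ω i
    have := hτa σ ω (Sum.inr i)
    simp only [Sum.elim_inr] at this
    rw [this, hsw]
    by_cases hb : σ i <;> simp [hb]
  -- ncard helper
  have hnc : ∀ (q : Fin n → Prop) [DecidablePred q],
      {i | q i}.ncard = (Finset.univ.filter q).card := by
    intro q _
    rw [Set.ncard_eq_toFinset_card']
    congr 1
    ext i
    simp
  -- the power identity
  have hPOW : (2:ℝ) ^ (ε * n) = (2*(n:ℝ)) ^ (d*(T+1)) / δ := by
    have hεn' : ε * n = ((d*(T+1) : ℕ) : ℝ) * Real.logb 2 (2*(n:ℝ)) + Real.logb 2 (1/δ) := by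
      rw [hε]
      push_cast
      field_simp
      try ring
    rw [hεn', Real.rpow_add (by norm_num : (0:ℝ) < 2),
      mul_comm (((d*(T+1) : ℕ)):ℝ) (Real.logb 2 (2*(n:ℝ))),
      Real.rpow_mul (by norm_num : (0:ℝ) ≤ 2),
      Real.rpow_logb (by norm_num) (by norm_num) h2n0,
      Real.rpow_logb (by norm_num) (by norm_num) (by positivity : (0:ℝ) < 1/δ),
      Real.rpow_natCast, mul_one_div]
  -- the key pointwise counting bound
  have key : ∀ ω : (Fin n → X) × (Fin n → X),
      (((Finset.univ.filter (fun σ : Fin n → Bool => τ σ ω ∈ E)).card : ℝ)) ≤ 2 ^ n * δ := by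
    intro ω
    set a : (Fin n ⊕ Fin n) → X := Sum.elim ω.1 ω.2 with ha
    set kp : ((Fin n ⊕ Fin n) → Bool) → ℕ := fun p =>
      (Finset.univ.filter (fun i : Fin n => (p (Sum.inl i) || p (Sum.inr i)) = true)).card
      with hkp
    set Pats : Finset ((Fin n ⊕ Fin n) → Bool) := Finset.univ.filter (fun p =>
      (∃ h ∈ C, ∃ c : Fin T → X → Bool, (∀ j, c j ∈ C) ∧
        ∀ i, p i = !decide (∀ j, c j (a i) = h (a i))) ∧ ε < (kp p : ℝ) / n) with hPatsdef
    have hPcard : Pats.card ≤ (2*n) ^ (d * (T+1)) := by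
      refine aux_pattern_card C d hd hC.2 T n hn a Pats fun p hp => ?_
      rw [hPatsdef, Finset.mem_filter] at hp
      exact hp.2.1
    have hcover : Finset.univ.filter (fun σ : Fin n → Bool => τ σ ω ∈ E) ⊆
        Pats.biUnion (fun p => Finset.univ.filter
          (fun σ : Fin n → Bool => ∀ i,
            (p (Sum.inl i) || p (Sum.inr i)) = true → σ i = p (Sum.inl i))) := by
      intro σ hσ
      rw [Finset.mem_filter] at hσ
      have hσE := hσ.2
      rw [hEdef] at hσE
      simp only [Set.mem_setOf_eq] at hσE
      obtain ⟨h, hhC, c, hcC, hx0, hz⟩ := hσE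
      set p : (Fin n ⊕ Fin n) → Bool :=
        fun i => !decide (∀ j, c j (a i) = h (a i)) with hpdef
      have hx0' : ∀ i : Fin n, ∀ j, c j ((τ σ ω).1 i) = h ((τ σ ω).1 i) := by
        have h1 : ({i : Fin n | (τ σ ω).1 i ∉ {x : X | ∀ j, c j x = h x}} : Set (Fin n)).ncard
            = 0 := by
          have h2 := hx0
          rw [div_eq_zero_iff] at h2
          rcases h2 with h2 | h2
          · exact_mod_cast h2
          · exact absurd h2 (ne_of_gt hn0)
        have h3 := (Set.ncard_eq_zero (Set.toFinite _)).mp h1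
        intro i j
        by_contra hcon
        have hi : i ∈ ({i : Fin n | (τ σ ω).1 i ∉ {x : X | ∀ j, c j x = h x}} : Set (Fin n)) := by
          simp only [Set.mem_setOf_eq]
          intro hmem
          exact hcon (hmem j)
        rw [h3] at hi
        exact hi
      have hxi : ∀ i : Fin n, (if σ i then p (Sum.inr i) else p (Sum.inl i)) = false := by
        intro i
        have h1 := hx0' i
        rw [hτ1 σ ω i] at h1
        by_cases hb : σ i
        · rw [if_pos hb] at h1 ⊢
          simp only [hpdef, ha, Sum.elim_inr, Bool.not_eq_false', decide_eq_true_eq]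
          exact decide_eq_true h1
        · rw [if_neg hb] at h1 ⊢
          simp only [hpdef, ha, Sum.elim_inl, Bool.not_eq_false', decide_eq_true_eq]
          exact decide_eq_true h1
      have hcnt : ({i : Fin n | (τ σ ω).2 i ∉ {x : X | ∀ j, c j x = h x}} : Set (Fin n)).ncard
          = kp p := by
        rw [hnc]
        rw [hkp]
        refine congrArg Finset.card (Finset.filter_congr fun i _ => ?_)
        rw [hτ2 σ ω i]
        by_cases hb : σ i
        · have h2 : p (Sum.inr i) = false := by have := hxi i; rwa [if_pos hb] at this
          rw [if_pos hb, h2, Bool.or_false]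
          simp only [hpdef, ha, Sum.elim_inl, Set.mem_setOf_eq, Bool.not_eq_true',
            decide_eq_false_iff_not]
          by_cases hq : ∀ j, c j (ω.1 i) = h (ω.1 i) <;> simp [hq]
        · have h2 : p (Sum.inl i) = false := by have := hxi i; rwa [if_neg hb] at this
          rw [if_neg hb, h2, Bool.false_or]
          simp only [hpdef, ha, Sum.elim_inr, Set.mem_setOf_eq, Bool.not_eq_true',
            decide_eq_false_iff_not]
          by_cases hq : ∀ j, c j (ω.2 i) = h (ω.2 i) <;> simp [hq]
      have hzε : ε < (kp p : ℝ) / n := by rw [← hcnt]; exact hz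
      have hpPats : p ∈ Pats := by
        rw [hPatsdef, Finset.mem_filter]
        exact ⟨Finset.mem_univ _, ⟨h, hhC, c, hcC, fun i => rfl⟩, hzε⟩
      refine Finset.mem_biUnion.mpr ⟨p, hpPats, Finset.mem_filter.mpr ⟨Finset.mem_univ _, ?_⟩⟩
      intro i hior
      by_cases hb : σ i
      · have h2 : p (Sum.inr i) = false := by have := hxi i; rwa [if_pos hb] at this
        rw [h2, Bool.or_false] at hior
        rw [hior]
        exact hb
      · have h2 : p (Sum.inl i) = false := by have := hxi i; rwa [if_neg hb] at this
        rw [h2]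
        exact Bool.not_eq_true (σ i) ▸ (by simpa using hb)
    -- counting
    have hforcedcard : ∀ p : (Fin n ⊕ Fin n) → Bool,
        (Finset.univ.filter (fun σ : Fin n → Bool => ∀ i,
          (p (Sum.inl i) || p (Sum.inr i)) = true → σ i = p (Sum.inl i))).card
        = 2 ^ (n - kp p) := by
      intro p
      have heq : Finset.univ.filter (fun σ : Fin n → Bool => ∀ i,
          (p (Sum.inl i) || p (Sum.inr i)) = true → σ i = p (Sum.inl i))
          = Finset.univ.filter (fun σ : Fin n → Bool =>
            ∀ i ∈ Finset.univ.filter (fun i : Fin n => (p (Sum.inl i) || p (Sum.inr i)) = true),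
              σ i = p (Sum.inl i)) := by
        refine Finset.filter_congr fun σ _ => ?_
        constructor
        · intro hall i hi
          rw [Finset.mem_filter] at hi
          exact hall i hi.2
        · intro hall i hcond
          exact hall i (Finset.mem_filter.mpr ⟨Finset.mem_univ _, hcond⟩)
      rw [heq, aux_forced_card n _ _, hkp]
    have hstep1 : ((Finset.univ.filter (fun σ : Fin n → Bool => τ σ ω ∈ E)).card : ℝ)
        ≤ ∑ p ∈ Pats, ((2:ℝ) ^ (n - kp p)) := by
      have h1 := Finset.card_le_card hcover
      have h2 := Finset.card_biUnion_le (s := Pats) (t := fun p => Finset.univ.filter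
          (fun σ : Fin n → Bool => ∀ i,
            (p (Sum.inl i) || p (Sum.inr i)) = true → σ i = p (Sum.inl i)))
      have h3 : (Finset.univ.filter (fun σ : Fin n → Bool => τ σ ω ∈ E)).card
          ≤ ∑ p ∈ Pats, 2 ^ (n - kp p) := by
        refine (h1.trans h2).trans ?_
        refine le_of_eq (Finset.sum_congr rfl fun p _ => ?_)
        exact hforcedcard p
      calc ((Finset.univ.filter (fun σ : Fin n → Bool => τ σ ω ∈ E)).card : ℝ)
          ≤ ((∑ p ∈ Pats, 2 ^ (n - kp p) : ℕ) : ℝ) := by exact_mod_cast h3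
        _ = ∑ p ∈ Pats, ((2:ℝ) ^ (n - kp p)) := by push_cast; rfl
    have hper : ∀ p ∈ Pats, ((2:ℝ) ^ (n - kp p)) ≤ 2^n * (δ / (2*(n:ℝ)) ^ (d*(T+1))) := by
      intro p hp
      rw [hPatsdef, Finset.mem_filter] at hp
      have hεk : ε < (kp p : ℝ) / n := hp.2.2
      have hkn : kp p ≤ n := by
        rw [hkp]
        exact (Finset.card_filter_le _ _).trans (by simp)
      have hεn2 : ε * n < (kp p : ℝ) := by
        calc ε * n < ((kp p : ℝ) / n) * n := by
              exact mul_lt_mul_of_pos_right hεk hn0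
          _ = (kp p : ℝ) := by field_simp
      have hsplit : (2:ℝ) ^ (n - kp p) * 2 ^ (kp p) = 2 ^ n := by
        rw [← pow_add]
        congr 1
        omega
      have hr1 : (2:ℝ) ^ (ε * n) ≤ (2:ℝ) ^ ((kp p : ℝ)) :=
        Real.rpow_le_rpow_of_exponent_le one_le_two (le_of_lt hεn2)
      have hr2 : (2:ℝ) ^ ((kp p : ℝ)) = 2 ^ (kp p) := Real.rpow_natCast 2 (kp p)
      have hkpos : (0:ℝ) < 2 ^ (kp p) := by positivity
      have h5 : (2*(n:ℝ)) ^ (d*(T+1)) / δ ≤ 2 ^ (kp p) := by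
        rw [← hPOW, ← hr2]
        exact hr1
      have h5pos : (0:ℝ) < (2*(n:ℝ)) ^ (d*(T+1)) / δ := by positivity
      have e1 : (2:ℝ) ^ (n - kp p) = 2 ^ n / 2 ^ (kp p) := by
        rw [eq_div_iff (ne_of_gt hkpos)]
        exact hsplit
      rw [e1]
      calc (2:ℝ) ^ n / 2 ^ (kp p) ≤ 2 ^ n / ((2*(n:ℝ)) ^ (d*(T+1)) / δ) :=
            div_le_div_of_nonneg_left (by positivity) h5pos h5
        _ = 2 ^ n * (δ / (2*(n:ℝ)) ^ (d*(T+1))) := by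
            rw [div_div_eq_mul_div, mul_div_assoc]
    calc ((Finset.univ.filter (fun σ : Fin n → Bool => τ σ ω ∈ E)).card : ℝ)
        ≤ ∑ p ∈ Pats, ((2:ℝ) ^ (n - kp p)) := hstep1
      _ ≤ ∑ _p ∈ Pats, (2:ℝ)^n * (δ / (2*(n:ℝ)) ^ (d*(T+1))) := Finset.sum_le_sum hper
      _ = Pats.card * ((2:ℝ)^n * (δ / (2*(n:ℝ)) ^ (d*(T+1)))) := by
          rw [Finset.sum_const, nsmul_eq_mul]
      _ ≤ (((2*n) ^ (d*(T+1)) : ℕ) : ℝ) * ((2:ℝ)^n * (δ / (2*(n:ℝ)) ^ (d*(T+1)))) := by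
          refine mul_le_mul_of_nonneg_right ?_ (by positivity)
          exact_mod_cast hPcard
      _ = 2 ^ n * δ := by
          have hc : (((2*n) ^ (d*(T+1)) : ℕ) : ℝ) = (2*(n:ℝ)) ^ (d*(T+1)) := by push_cast; ring
          rw [hc]
          field_simp
          try ring
  -- measure-theoretic assembly
  haveI : IsProbabilityMeasure μ := by
    rw [hμdef]
    infer_instance
  have hEν : μ E ≤ ENNReal.ofReal δ := by
    have hτmeas : ∀ σ, MeasurableSet (τ σ ⁻¹' E) := fun σ => (hmp σ).measurable hEmeas
    have hsum1 : ∑ σ : Fin n → Bool, μ (τ σ ⁻¹' E) = (2:ℝ≥0∞) ^ n * μ E := by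
      have h1 : ∀ σ : Fin n → Bool, μ (τ σ ⁻¹' E) = μ E := fun σ =>
        (hmp σ).measure_preimage hEmeas.nullMeasurableSet
      rw [Finset.sum_congr rfl (fun σ _ => h1 σ), Finset.sum_const, nsmul_eq_mul]
      congr 1
      rw [Finset.card_univ]
      simp [Fintype.card_fun]
    have hsum2 : ∑ σ : Fin n → Bool, μ (τ σ ⁻¹' E)
        = ∫⁻ ω, (((Finset.univ.filter (fun σ : Fin n → Bool => τ σ ω ∈ E)).card : ℝ≥0∞)) ∂μ := by
      have h1 : ∀ σ : Fin n → Bool,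
          μ (τ σ ⁻¹' E) = ∫⁻ ω, (τ σ ⁻¹' E).indicator (1 : ((Fin n → X) × (Fin n → X)) → ℝ≥0∞) ω ∂μ := by
        intro σ
        exact (lintegral_indicator_one (hτmeas σ)).symm
      rw [Finset.sum_congr rfl fun σ _ => h1 σ, ← lintegral_finset_sum]
      · congr 1
        funext ω'
        rw [Finset.card_filter]
        push_cast
        refine Finset.sum_congr rfl fun σ _ => ?_
        by_cases hσ : τ σ ω' ∈ E <;> simp [Set.indicator_apply, hσ]
      · exact fun σ _ => measurable_const.indicator (hτmeas σ)
    have hbound : ∫⁻ ω, (((Finset.univ.filter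
          (fun σ : Fin n → Bool => τ σ ω ∈ E)).card : ℝ≥0∞)) ∂μ
        ≤ ENNReal.ofReal (2^n * δ) := by
      calc ∫⁻ ω, (((Finset.univ.filter
            (fun σ : Fin n → Bool => τ σ ω ∈ E)).card : ℝ≥0∞)) ∂μ
          ≤ ∫⁻ _ω, ENNReal.ofReal (2^n * δ) ∂μ := by
            refine lintegral_mono fun ω => ?_
            have hk := key ω
            calc (((Finset.univ.filter (fun σ : Fin n → Bool => τ σ ω ∈ E)).card : ℝ≥0∞))
                = ENNReal.ofReal (((Finset.univ.filter
                    (fun σ : Fin n → Bool => τ σ ω ∈ E)).card : ℝ)) := by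
                  rw [ENNReal.ofReal_natCast]
              _ ≤ ENNReal.ofReal (2^n * δ) := ENNReal.ofReal_le_ofReal hk
        _ = ENNReal.ofReal (2^n * δ) := by rw [lintegral_const, measure_univ, mul_one]
    have hfinal : (2:ℝ≥0∞) ^ n * μ E ≤ (2:ℝ≥0∞) ^ n * ENNReal.ofReal δ := by
      rw [← hsum1]
      rw [hsum2]
      refine hbound.trans (le_of_eq ?_)
      rw [ENNReal.ofReal_mul (by positivity : (0:ℝ) ≤ 2^n)]
      congr 1
      rw [ENNReal.ofReal_pow (by norm_num : (0:ℝ) ≤ 2)]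
      norm_num
    have h2ne : ((2:ℝ≥0∞) ^ n) ≠ 0 := by positivity
    have h2top : ((2:ℝ≥0∞) ^ n) ≠ ⊤ := by
      exact ENNReal.pow_ne_top (by norm_num)
    exact (ENNReal.mul_le_mul_iff_right h2ne h2top).mp hfinal
  exact ENNReal.toReal_le_of_le_ofReal hδ0.le hEν
end

section
/- Let X be a set, n ∈ ℕ, Λ > 0, let h, c_1, …, c_T : X → {0,1}, and for t = 1, …, T+1 define S_t := {x ∈ X : h(x) = c_1(x) = ⋯ = c_{t−1}(x)} (so S_1 = X). Let x, z ∈ X^n, and suppose that for each t ∈ [T]: |{i ∈ [n] : z_i ∈ S_t and c_t(z_i) ≠ h(z_i)}| ≥ Λ · |{i ∈ [n] : c_t(x_i) ≠ h(x_i)}|. Then rej_x(S_{T+1}) ≤ 1/Λ. (This is the training-rejection bound satisfied by the output of Rejectron run with weight Λ, since its chosen c_t always achieves a nonnegative score.) -/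
/-- Let `X` be a set, `n ∈ ℕ`, `Λ > 0`, classifiers
`h, c_1, …, c_T : X → {0,1}` (here `c : Fin T → X → Bool`, 0-indexed), and for each
`t` let `S_t = {x | h(x) = c_j(x) for all j < t}` (so the paper's `S_{T+1}` is
`{x | ∀ j, c_j(x) = h(x)}`). If for each `t`,
`|{i : z_i ∈ S_t ∧ c_t(z_i) ≠ h(z_i)}| ≥ Λ·|{i : c_t(x_i) ≠ h(x_i)}|`,
then `rej_x(S_{T+1}) ≤ 1/Λ`. -/
theorem stmt12 {X : Type*} (n T : ℕ) (Λ : ℝ) (hΛ : 0 < Λ)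
    (h : X → Bool) (c : Fin T → X → Bool) (x z : Fin n → X)
    (hstep : ∀ t : Fin T,
      Λ * (Set.ncard {i : Fin n | c t (x i) ≠ h (x i)} : ℝ) ≤
        (Set.ncard {i : Fin n |
          (∀ j : Fin T, (j : ℕ) < (t : ℕ) → c j (z i) = h (z i)) ∧
          c t (z i) ≠ h (z i)} : ℝ)) :
    (Set.ncard {i : Fin n | x i ∉ {a : X | ∀ j, c j a = h a}} : ℝ) / n ≤ 1 / Λ := by
  classical
  set A : Finset (Fin n) := Finset.univ.filter (fun i => ¬ ∀ j, c j (x i) = h (x i)) with hA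
  set At : Fin T → Finset (Fin n) :=
    fun t => Finset.univ.filter (fun i => c t (x i) ≠ h (x i)) with hAt
  set Bt : Fin T → Finset (Fin n) :=
    fun t => Finset.univ.filter (fun i =>
      (∀ j : Fin T, (j : ℕ) < (t : ℕ) → c j (z i) = h (z i)) ∧ c t (z i) ≠ h (z i)) with hBt
  have hAcard : Set.ncard {i : Fin n | x i ∉ {a : X | ∀ j, c j a = h a}} = A.card := by
    rw [Set.ncard_eq_toFinset_card']
    congr 1
    ext i
    simp [hA]
  have hAtcard : ∀ t, Set.ncard {i : Fin n | c t (x i) ≠ h (x i)} = (At t).card := by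
    intro t
    rw [Set.ncard_eq_toFinset_card']
    congr 1
    ext i
    simp [hAt]
  have hBtcard : ∀ t : Fin T, Set.ncard {i : Fin n |
      (∀ j : Fin T, (j : ℕ) < (t : ℕ) → c j (z i) = h (z i)) ∧
      c t (z i) ≠ h (z i)} = (Bt t).card := by
    intro t
    rw [Set.ncard_eq_toFinset_card']
    congr 1
    ext i
    simp [hBt]
  -- A is contained in the union of the At
  have hsub : A ⊆ Finset.univ.biUnion At := by
    intro i hi
    simp only [hA, Finset.mem_filter, Finset.mem_univ, true_and] at hi
    push_neg at hi
    obtain ⟨j, hj⟩ := hi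
    simp only [Finset.mem_biUnion, Finset.mem_univ, true_and]
    exact ⟨j, by simp [hAt, hj]⟩
  have h1 : (A.card : ℝ) ≤ ∑ t, ((At t).card : ℝ) := by
    have := (Finset.card_le_card hsub).trans (Finset.card_biUnion_le)
    exact_mod_cast this
  -- Bt are pairwise disjoint
  have hdisj : ∀ t ∈ (Finset.univ : Finset (Fin T)), ∀ t' ∈ Finset.univ, t ≠ t' →
      Disjoint (Bt t) (Bt t') := by
    intro t _ t' _ hne
    rw [Finset.disjoint_left]
    intro i hi hi'
    simp only [hBt, Finset.mem_filter, Finset.mem_univ, true_and] at hi hi'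
    rcases lt_or_gt_of_ne (fun hh : (t : ℕ) = (t' : ℕ) => hne (Fin.ext hh)) with hlt | hlt
    · exact hi.2 (hi'.1 t hlt)
    · exact hi'.2 (hi.1 t' hlt)
  have h2 : ∑ t, ((Bt t).card : ℝ) ≤ (n : ℝ) := by
    have := Finset.card_biUnion hdisj
    have hle : (Finset.univ.biUnion Bt).card ≤ n := by
      simpa using Finset.card_le_card (Finset.subset_univ (Finset.univ.biUnion Bt))
    rw [this] at hle
    exact_mod_cast hle
  have hkey : Λ * (A.card : ℝ) ≤ (n : ℝ) := by
    calc Λ * (A.card : ℝ) ≤ Λ * ∑ t, ((At t).card : ℝ) := by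
          exact mul_le_mul_of_nonneg_left h1 hΛ.le
      _ = ∑ t, Λ * ((At t).card : ℝ) := Finset.mul_sum _ _ _
      _ ≤ ∑ t, ((Bt t).card : ℝ) := by
          apply Finset.sum_le_sum
          intro t _
          have := hstep t
          rwa [hAtcard t, hBtcard t] at this
      _ ≤ (n : ℝ) := h2
  rw [hAcard]
  rcases Nat.eq_zero_or_pos n with hn | hn
  · subst hn
    simp
    positivity
  · rw [div_le_div_iff₀ (by exact_mod_cast hn) hΛ]
    linarith [hkey]
end

section
/- Let C be a class of binary classifiers on a set X, let n ∈ ℕ, ε ≥ 0, Λ ≥ 0, let x, x̃ ∈ X^n and y, ỹ ∈ {0,1}^n, and let f ∈ C. Suppose h ∈ C satisfies err(h(x), y) ≤ err(f(x), y) (as holds when h minimizes empirical error over C on (x,y)), and suppose S ⊆ X satisfies the Rejectron stopping condition: for every c ∈ C, err_{x̃}(h|_S, c) − Λ·err_x(h, c) ≤ ε. Then err(h|_S(x̃), ỹ) ≤ ε + 2Λ·err(f(x), y) + err(f(x̃), ỹ). -/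
lemma ncard_sub_le {n : ℕ} (A B D : Set (Fin n)) (hsub : A ⊆ B ∪ D) :
    (A.ncard : ℝ) ≤ B.ncard + D.ncard := by
  have h1 : A.ncard ≤ (B ∪ D).ncard := Set.ncard_le_ncard hsub (Set.toFinite _)
  have h2 : (B ∪ D).ncard ≤ B.ncard + D.ncard := Set.ncard_union_le B D
  exact_mod_cast le_trans h1 h2

/-- if `h ∈ C` has empirical error on `(x,y)` no larger than `f ∈ C`,
and `S` satisfies the Rejectron stopping condition
`err_{x̃}(h|_S, c) − Λ·err_x(h, c) ≤ ε` for every `c ∈ C`, then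
`err(h|_S(x̃), ỹ) ≤ ε + 2Λ·err(f(x), y) + err(f(x̃), ỹ)`. -/
theorem stmt13 {X : Type*} (C : Set (X → Bool)) (n : ℕ) (ε Λ : ℝ)
    (hε : 0 ≤ ε) (hΛ : 0 ≤ Λ)
    (x xt : Fin n → X) (y yt : Fin n → Bool)
    (f : X → Bool) (hf : f ∈ C) (h : X → Bool) (hh : h ∈ C)
    (hERM : (Set.ncard {i : Fin n | h (x i) ≠ y i} : ℝ) / n ≤
            (Set.ncard {i : Fin n | f (x i) ≠ y i} : ℝ) / n)
    (S : Set X)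
    (hstop : ∀ c ∈ C,
      (Set.ncard {i : Fin n | h (xt i) ≠ c (xt i) ∧ xt i ∈ S} : ℝ) / n -
        Λ * ((Set.ncard {i : Fin n | h (x i) ≠ c (x i)} : ℝ) / n) ≤ ε) :
    (Set.ncard {i : Fin n | xt i ∈ S ∧ h (xt i) ≠ yt i} : ℝ) / n ≤
      ε + 2 * Λ * ((Set.ncard {i : Fin n | f (x i) ≠ y i} : ℝ) / n) +
        (Set.ncard {i : Fin n | f (xt i) ≠ yt i} : ℝ) / n := by
  rcases Nat.eq_zero_or_pos n with hn0 | hn0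
  · subst hn0
    have : ∀ (T : Set (Fin 0)), T.ncard = 0 := fun T => by
      simp [Set.eq_empty_of_isEmpty T]
    simp only [this]
    norm_num
    positivity
  have hnpos : (0:ℝ) < (n:ℝ) := by exact_mod_cast hn0
  have hstopf := hstop f hf
  -- counting facts
  have hcount1 : (Set.ncard {i : Fin n | h (x i) ≠ f (x i)} : ℝ) ≤
      (Set.ncard {i : Fin n | h (x i) ≠ y i} : ℝ) +
      (Set.ncard {i : Fin n | f (x i) ≠ y i} : ℝ) := by
    apply ncard_sub_le
    intro i hi
    simp only [Set.mem_setOf_eq, Set.mem_union] at *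
    by_contra hc
    push_neg at hc
    exact hi (hc.1.trans hc.2.symm)
  have hcount2 : (Set.ncard {i : Fin n | xt i ∈ S ∧ h (xt i) ≠ yt i} : ℝ) ≤
      (Set.ncard {i : Fin n | h (xt i) ≠ f (xt i) ∧ xt i ∈ S} : ℝ) +
      (Set.ncard {i : Fin n | f (xt i) ≠ yt i} : ℝ) := by
    apply ncard_sub_le
    intro i hi
    simp only [Set.mem_setOf_eq, Set.mem_union] at *
    by_contra hc
    push_neg at hc
    have hfe : h (xt i) = f (xt i) := by
      by_contra hne
      exact hc.1 hne hi.1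
    exact hi.2 (hfe.trans hc.2)
  have hERM' : (Set.ncard {i : Fin n | h (x i) ≠ y i} : ℝ) ≤
      (Set.ncard {i : Fin n | f (x i) ≠ y i} : ℝ) :=
    (div_le_div_iff_of_pos_right hnpos).mp hERM
  have key : (Set.ncard {i : Fin n | h (x i) ≠ f (x i)} : ℝ) / n ≤
      2 * ((Set.ncard {i : Fin n | f (x i) ≠ y i} : ℝ) / n) := by
    rw [div_le_iff₀ hnpos]
    calc (Set.ncard {i : Fin n | h (x i) ≠ f (x i)} : ℝ)
        ≤ (Set.ncard {i : Fin n | h (x i) ≠ y i} : ℝ) +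
          (Set.ncard {i : Fin n | f (x i) ≠ y i} : ℝ) := hcount1
      _ ≤ 2 * (Set.ncard {i : Fin n | f (x i) ≠ y i} : ℝ) := by linarith
      _ = 2 * ((Set.ncard {i : Fin n | f (x i) ≠ y i} : ℝ) / n) * n := by
          field_simp
  have hA : (Set.ncard {i : Fin n | xt i ∈ S ∧ h (xt i) ≠ yt i} : ℝ) / n ≤
      (Set.ncard {i : Fin n | h (xt i) ≠ f (xt i) ∧ xt i ∈ S} : ℝ) / n +
      (Set.ncard {i : Fin n | f (xt i) ≠ yt i} : ℝ) / n := by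
    rw [← add_div]
    exact div_le_div_of_nonneg_right hcount2 hnpos.le
  have hΛkey : Λ * ((Set.ncard {i : Fin n | h (x i) ≠ f (x i)} : ℝ) / n) ≤
      Λ * (2 * ((Set.ncard {i : Fin n | f (x i) ≠ y i} : ℝ) / n)) :=
    mul_le_mul_of_nonneg_left key hΛ
  linarith
end

section
/- There exists a class C of binary classifiers on X = ℕ of VC dimension 1 such that for every η, η̃ ∈ [0, 1/2], every n ≥ 1, and every selective classification algorithm L : X^n × {0,1}^n × X^n → (classifier on X) × (subsets of X), there exist probability distributions μ and μ̃ on X × {0,1} and a classifier f ∈ C with err_μ(f) ≤ η and err_{μ̃}(f) ≤ η̃, such that E_{(x,y)∼μ^n, (x̃,ỹ)∼μ̃^n}[ err_{μ̃}(h|_S) + rej_μ(S) ] ≥ max{ √(η/8), η̃ }, where (h, S) = L(x, y, x̃). -/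
open MeasureTheory
open scoped ENNReal

noncomputable section Stmt19Aux
def fpt (j : ℕ) : ℕ → Bool := fun x => decide (x ≠ j)
def Cstar : Set (ℕ → Bool) := {g | (g = fun _ => true) ∨ ∃ j, g = fpt j}

def muTr (k : ℕ) (e : ℝ≥0∞) : Measure (ℕ × Bool) :=
  (1 - k * e) • Measure.dirac ((0:ℕ), true) + ∑ i ∈ Finset.range k, e • Measure.dirac ((i+1:ℕ), true)
def nuU (k : ℕ) : Measure ℕ := (k : ℝ≥0∞)⁻¹ • ∑ i ∈ Finset.range k, Measure.dirac (i+1)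
def muTe (k j : ℕ) : Measure (ℕ × Bool) := (nuU k).map (fun x => (x, fpt j x))

lemma muTr_apply (k : ℕ) (e : ℝ≥0∞) (E : Set (ℕ × Bool)) :
    muTr k e E = (1 - k * e) * (E.indicator 1 ((0:ℕ), true)) +
      ∑ i ∈ Finset.range k, e * (E.indicator 1 ((i+1:ℕ), true)) := by
  simp [muTr, Measure.coe_finset_sum, Finset.sum_apply, Measure.dirac_apply, smul_eq_mul]

lemma nuU_apply (k : ℕ) (E : Set ℕ) :
    nuU k E = (k : ℝ≥0∞)⁻¹ * ∑ i ∈ Finset.range k, E.indicator 1 (i+1) := by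
  simp [nuU, Measure.coe_finset_sum, Finset.sum_apply, Measure.dirac_apply, smul_eq_mul]

lemma muTe_apply (k j : ℕ) (E : Set (ℕ × Bool)) :
    muTe k j E = nuU k {x | (x, fpt j x) ∈ E} := by
  rw [muTe, Measure.map_apply (measurable_of_countable _) ((Set.to_countable E).measurableSet)]
  rfl

lemma muTr_prob (k : ℕ) (e : ℝ≥0∞) (h1 : (k:ℝ≥0∞) * e ≤ 1) : IsProbabilityMeasure (muTr k e) := by
  constructor
  rw [muTr_apply]
  simp only [Set.indicator_univ, Pi.one_apply, mul_one, Finset.sum_const, Finset.card_range,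
    nsmul_eq_mul]
  exact tsub_add_cancel_of_le h1

lemma nuU_prob (k : ℕ) (hk : k ≠ 0) : IsProbabilityMeasure (nuU k) := by
  constructor
  rw [nuU_apply]
  simp only [Set.indicator_univ, Pi.one_apply, Finset.sum_const, Finset.card_range, nsmul_eq_mul,
    mul_one]
  exact ENNReal.inv_mul_cancel (by exact_mod_cast hk) (by simp)

lemma muTe_prob (k j : ℕ) (hk : k ≠ 0) : IsProbabilityMeasure (muTe k j) := by
  have := nuU_prob k hk
  exact Measure.isProbabilityMeasure_map (measurable_of_countable _).aemeasurable

lemma int_helper {Ω : Type*} [MeasurableSpace Ω] [MeasurableSingletonClass Ω] [Countable Ω]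
    (P : Measure Ω) [IsProbabilityMeasure P] (F : Ω → ℝ) (C : ℝ) (hb : ∀ ω, ‖F ω‖ ≤ C) :
    Integrable F P :=
  ⟨(measurable_of_countable F).aestronglyMeasurable,
    HasFiniteIntegral.of_bounded (C := C) (ae_of_all _ hb)⟩

lemma toReal_le_one' {α : Type*} [MeasurableSpace α] (μ : Measure α) [IsProbabilityMeasure μ]
    (E : Set α) : (μ E).toReal ≤ 1 := by
  have h : μ E ≤ 1 := by
    rw [← measure_univ (μ := μ)]
    exact measure_mono (Set.subset_univ E)
  simpa using ENNReal.toReal_mono (show (1:ℝ≥0∞) ≠ ⊤ by simp) h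

lemma integral_ge_const {Ω : Type*} [MeasurableSpace Ω] [MeasurableSingletonClass Ω] [Countable Ω]
    (P : Measure Ω) [IsProbabilityMeasure P] (F : Ω → ℝ) (c C : ℝ) (hb : ∀ ω, ‖F ω‖ ≤ C)
    (hc : ∀ ω, c ≤ F ω) : c ≤ ∫ ω, F ω ∂P := by
  have h := integral_mono (integrable_const c) (int_helper P F C hb) hc
  simpa using h

lemma norm_F_le {μ μt : Measure (ℕ × Bool)} (hμ : IsProbabilityMeasure μ)
    (hμt : IsProbabilityMeasure μt)
    (E1 E2 : Set (ℕ × Bool)) : ‖(μt E1).toReal + (μ E2).toReal‖ ≤ 2 := by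
  rw [Real.norm_eq_abs, abs_of_nonneg (by positivity)]
  have := toReal_le_one' μt E1
  have := toReal_le_one' μ E2
  linarith

set_option maxHeartbeats 2000000 in
lemma case2 (η ηt : ℝ) (h0η : 0 ≤ η) (hη2 : η ≤ 1/2) (h0t : 0 ≤ ηt)
    (hcase : ηt < Real.sqrt (η/8))
    (n : ℕ) (L : (Fin n → ℕ) → (Fin n → Bool) → (Fin n → ℕ) → (ℕ → Bool) × Set ℕ) :
    ∃ μ μt : Measure (ℕ × Bool), IsProbabilityMeasure μ ∧ IsProbabilityMeasure μt ∧
    ∃ f ∈ Cstar,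
      (μ {p : ℕ × Bool | f p.1 ≠ p.2}).toReal ≤ η ∧
      (μt {p : ℕ × Bool | f p.1 ≠ p.2}).toReal ≤ ηt ∧
      max (Real.sqrt (η / 8)) ηt ≤
        ∫ ω : (Fin n → ℕ × Bool) × (Fin n → ℕ × Bool),
          (fun hS : (ℕ → Bool) × Set ℕ =>
            (μt {p : ℕ × Bool | hS.1 p.1 ≠ p.2 ∧ p.1 ∈ hS.2}).toReal +
            (μ {p : ℕ × Bool | p.1 ∉ hS.2}).toReal)
            (L (fun i => (ω.1 i).1) (fun i => (ω.1 i).2) (fun i => (ω.2 i).1))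
          ∂((Measure.pi fun _ : Fin n => μ).prod (Measure.pi fun _ : Fin n => μt)) := by
  classical
  set s := Real.sqrt (η/8) with hs
  have hs0 : 0 < s := lt_of_le_of_lt h0t hcase
  have hssq : s^2 = η/8 := Real.sq_sqrt (by linarith)
  have hs4 : s ≤ 1/4 := by nlinarith [hssq, hs0]
  set ε : ℝ := 4*s^2 with hε
  have hε0 : 0 < ε := by positivity
  set k : ℕ := ⌈1/(4*s)⌉₊ + 1 with hk
  have hk2 : 2 ≤ k := by
    have : 1 ≤ ⌈1/(4*s)⌉₊ := Nat.one_le_ceil_iff.mpr (by positivity)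
    omega
  have hk0 : 0 < k := by omega
  have hklb : 1/(4*s) ≤ (k:ℝ) := by
    have h1 := Nat.le_ceil (1/(4*s))
    have h2 : ((⌈1/(4*s)⌉₊ : ℕ) : ℝ) ≤ (k:ℝ) := by exact_mod_cast Nat.le_succ _
    linarith
  have hkub : (k:ℝ) ≤ 1/(4*s) + 2 := by
    have := Nat.ceil_lt_add_one (show (0:ℝ) ≤ 1/(4*s) by positivity)
    have h2 : (k:ℝ) = ((⌈1/(4*s)⌉₊ : ℕ) : ℝ) + 1 := by exact_mod_cast rfl
    linarith
  have hid : (1/(4*s)) * ε = s := by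
    rw [hε]; field_simp
  have hsk1 : s * k ≤ 1 := by nlinarith
  have hske : s ≤ (k:ℝ) * ε := by nlinarith
  have hkε1 : (k:ℝ) * ε ≤ 1 := by nlinarith
  have hεη : ε ≤ η := by nlinarith
  set ε' : ℝ≥0∞ := ENNReal.ofReal ε with hε'
  have hkε' : (k:ℝ≥0∞) * ε' = ENNReal.ofReal ((k:ℝ)*ε) := by
    rw [hε', ← ENNReal.ofReal_natCast k, ← ENNReal.ofReal_mul (Nat.cast_nonneg k)]
  have hkε'1 : (k:ℝ≥0∞) * ε' ≤ 1 := by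
    rw [hkε']; exact ENNReal.ofReal_le_one.mpr hkε1
  set μ := muTr k ε' with hμ
  haveI hPμ : IsProbabilityMeasure μ := muTr_prob k ε' hkε'1
  haveI hPν : IsProbabilityMeasure (nuU k) := nuU_prob k (by omega)
  haveI hPμt : ∀ j, IsProbabilityMeasure (muTe k j) := fun j => muTe_prob k j (by omega)
  -- pointwise key inequality
  have key : ∀ (h : ℕ → Bool) (S : Set ℕ),
      (k:ℝ) * s ≤ ∑ j ∈ Finset.range k,
        ((muTe k (j+1) {p : ℕ × Bool | h p.1 ≠ p.2 ∧ p.1 ∈ S}).toReal +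
         (μ {p : ℕ × Bool | p.1 ∉ S}).toReal) := by
    intro h S
    set V := (Finset.range k).filter (fun i => (i+1:ℕ) ∈ S) with hV
    set W := (Finset.range k).filter (fun i => ¬ ((i+1:ℕ) ∈ S)) with hW
    have hVW : V.card + W.card = k := by
      rw [hV, hW, Finset.card_filter_add_card_filter_not, Finset.card_range]
    -- rejection lower bound
    have hrej : ε * W.card ≤ (μ {p : ℕ × Bool | p.1 ∉ S}).toReal := by
      have hle : ENNReal.ofReal (ε * W.card) ≤ μ {p : ℕ × Bool | p.1 ∉ S} := by
        rw [hμ, muTr_apply]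
        have hterm : ∀ i, ε' * ({p : ℕ × Bool | p.1 ∉ S}.indicator 1 ((i+1:ℕ), true))
            = if ¬ ((i+1:ℕ) ∈ S) then ε' else 0 := by
          intro i
          by_cases hi : (i+1:ℕ) ∈ S <;> simp [Set.indicator_apply, hi]
        have hsum : ∑ i ∈ Finset.range k, ε' * ({p : ℕ × Bool | p.1 ∉ S}.indicator 1 ((i+1:ℕ), true))
            = W.card * ε' := by
          simp only [hterm]
          rw [← Finset.sum_filter, ← hW, Finset.sum_const, nsmul_eq_mul]
        calc ENNReal.ofReal (ε * W.card)
            = W.card * ε' := by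
              rw [hε', ← ENNReal.ofReal_natCast W.card,
                ← ENNReal.ofReal_mul (Nat.cast_nonneg W.card), mul_comm]
          _ = ∑ i ∈ Finset.range k, ε' * ({p : ℕ × Bool | p.1 ∉ S}.indicator 1 ((i+1:ℕ), true)) :=
              hsum.symm
          _ ≤ _ := le_add_self
      have := ENNReal.toReal_mono (measure_ne_top μ _) hle
      rwa [ENNReal.toReal_ofReal (by positivity)] at this
    -- error term formula
    have herr : ∀ j, (muTe k (j+1) {p : ℕ × Bool | h p.1 ≠ p.2 ∧ p.1 ∈ S}).toReal
        = (1/(k:ℝ)) * ∑ i ∈ Finset.range k,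
            (if (h (i+1) ≠ fpt (j+1) (i+1)) ∧ ((i+1:ℕ) ∈ S) then (1:ℝ) else 0) := by
      intro j
      rw [muTe_apply, nuU_apply]
      rw [ENNReal.toReal_mul, ENNReal.toReal_inv, ENNReal.toReal_natCast,
        ENNReal.toReal_sum (fun i _ => by
          simp only [Set.indicator_apply]
          split_ifs <;> simp)]
      rw [one_div]
      congr 1
      apply Finset.sum_congr rfl
      intro i _
      by_cases hc : (h (i+1) ≠ fpt (j+1) (i+1)) ∧ ((i+1:ℕ) ∈ S)
      · have hmem : (i+1:ℕ) ∈ {x : ℕ | (x, fpt (j+1) x) ∈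
            {p : ℕ × Bool | h p.1 ≠ p.2 ∧ p.1 ∈ S}} := hc
        simp [Set.indicator_apply, hmem, hc]
      · have hmem : ¬ ((i+1:ℕ) ∈ {x : ℕ | (x, fpt (j+1) x) ∈
            {p : ℕ × Bool | h p.1 ≠ p.2 ∧ p.1 ∈ S}}) := hc
        simp [Set.indicator_apply, hmem, hc]
    -- double sum bound
    have hdouble : (V.card : ℝ) ≤ ∑ j ∈ Finset.range k, ∑ i ∈ Finset.range k,
        (if (h (i+1) ≠ fpt (j+1) (i+1)) ∧ ((i+1:ℕ) ∈ S) then (1:ℝ) else 0) := by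
      rw [Finset.sum_comm]
      have hone : ∀ i ∈ V, (1:ℝ) ≤ ∑ j ∈ Finset.range k,
          (if (h (i+1) ≠ fpt (j+1) (i+1)) ∧ ((i+1:ℕ) ∈ S) then (1:ℝ) else 0) := by
        intro i hi
        rw [hV, Finset.mem_filter, Finset.mem_range] at hi
        obtain ⟨hik, hiS⟩ := hi
        set j0 : ℕ := if h (i+1) = true then i else (if i = 0 then 1 else 0) with hj0
        have hj0r : j0 ∈ Finset.range k := by
          rw [Finset.mem_range, hj0]
          split_ifs <;> omega
        have hcond : (h (i+1) ≠ fpt (j0+1) (i+1)) ∧ ((i+1:ℕ) ∈ S) := by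
          refine ⟨?_, hiS⟩
          by_cases hh : h (i+1) = true
          · have hji : j0 = i := by rw [hj0, if_pos hh]
            rw [hji, hh]
            simp [fpt]
          · have hne : i + 1 ≠ j0 + 1 := by
              rw [hj0, if_neg hh]
              split_ifs <;> omega
            have : fpt (j0+1) (i+1) = true := by
              simp [fpt, hne]; omega
            rw [this]
            simp [hh]
        have := Finset.single_le_sum
          (f := fun j => if (h (i+1) ≠ fpt (j+1) (i+1)) ∧ ((i+1:ℕ) ∈ S) then (1:ℝ) else 0)
          (fun j _ => by positivity) hj0r
        simpa [hcond.1, hcond.2] using this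
      calc (V.card : ℝ) = ∑ _i ∈ V, (1:ℝ) := by simp
        _ ≤ ∑ i ∈ V, ∑ j ∈ Finset.range k,
            (if (h (i+1) ≠ fpt (j+1) (i+1)) ∧ ((i+1:ℕ) ∈ S) then (1:ℝ) else 0) :=
          Finset.sum_le_sum hone
        _ ≤ ∑ i ∈ Finset.range k, ∑ j ∈ Finset.range k,
            (if (h (i+1) ≠ fpt (j+1) (i+1)) ∧ ((i+1:ℕ) ∈ S) then (1:ℝ) else 0) := by
          apply Finset.sum_le_sum_of_subset_of_nonneg (Finset.filter_subset _ _)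
          intro i _ _
          positivity
    -- combine
    have hk0' : (0:ℝ) < k := by exact_mod_cast hk0
    have hsk : s ≤ 1/(k:ℝ) := by
      rw [le_div_iff₀ hk0']
      linarith [mul_comm s (k:ℝ)]
    calc (k:ℝ) * s = s * V.card + s * W.card := by
          have hc : (V.card : ℝ) + W.card = k := by exact_mod_cast hVW
          rw [← hc]; ring
      _ ≤ (1/(k:ℝ)) * V.card + ((k:ℝ)*ε) * W.card := by
          have h1 : s * V.card ≤ (1/(k:ℝ)) * V.card :=
            mul_le_mul_of_nonneg_right hsk (Nat.cast_nonneg _)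
          have h2 : s * W.card ≤ ((k:ℝ)*ε) * W.card :=
            mul_le_mul_of_nonneg_right hske (Nat.cast_nonneg _)
          linarith
      _ ≤ (1/(k:ℝ)) * (∑ j ∈ Finset.range k, ∑ i ∈ Finset.range k,
            (if (h (i+1) ≠ fpt (j+1) (i+1)) ∧ ((i+1:ℕ) ∈ S) then (1:ℝ) else 0))
            + (k:ℝ) * (μ {p : ℕ × Bool | p.1 ∉ S}).toReal := by
          have h1 : (1/(k:ℝ)) * (V.card:ℝ) ≤ (1/(k:ℝ)) * _ :=
            mul_le_mul_of_nonneg_left hdouble (by positivity)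
          have h2 : ((k:ℝ)*ε) * W.card ≤ (k:ℝ) * (μ {p : ℕ × Bool | p.1 ∉ S}).toReal := by
            have := mul_le_mul_of_nonneg_left hrej (le_of_lt hk0')
            linarith [this, mul_assoc (k:ℝ) ε (W.card:ℝ)]
          linarith
      _ = ∑ j ∈ Finset.range k,
          ((muTe k (j+1) {p : ℕ × Bool | h p.1 ≠ p.2 ∧ p.1 ∈ S}).toReal +
           (μ {p : ℕ × Bool | p.1 ∉ S}).toReal) := by
          rw [Finset.sum_add_distrib, Finset.sum_const, Finset.card_range, nsmul_eq_mul]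
          congr 1
          rw [Finset.mul_sum]
          apply Finset.sum_congr rfl
          intro j _
          rw [herr j]
  
  -- the common sample measure
  set P := (Measure.pi fun _ : Fin n => μ).prod (Measure.pi fun _ : Fin n => nuU k) with hPdef
  haveI hPP : IsProbabilityMeasure P := by rw [hPdef]; infer_instance
  set G : ℕ → ((Fin n → ℕ × Bool) × (Fin n → ℕ)) → ℝ := fun j w =>
    (fun hS : (ℕ → Bool) × Set ℕ =>
      (muTe k (j+1) {p : ℕ × Bool | hS.1 p.1 ≠ p.2 ∧ p.1 ∈ hS.2}).toReal +
      (μ {p : ℕ × Bool | p.1 ∉ hS.2}).toReal)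
      (L (fun i => (w.1 i).1) (fun i => (w.1 i).2) w.2) with hG
  have hGnorm : ∀ j w, ‖G j w‖ ≤ 2 := fun j w => norm_F_le hPμ (hPμt (j+1)) _ _
  have hGint : ∀ j ∈ Finset.range k, Integrable (G j) P := fun j _ =>
    int_helper P (G j) 2 (hGnorm j)
  have hGpt : ∀ w, (k:ℝ) * s ≤ ∑ j ∈ Finset.range k, G j w := by
    intro w
    exact key (L (fun i => (w.1 i).1) (fun i => (w.1 i).2) w.2).1
      (L (fun i => (w.1 i).1) (fun i => (w.1 i).2) w.2).2
  have hsum : (k:ℝ) * s ≤ ∑ j ∈ Finset.range k, ∫ w, G j w ∂P := by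
    rw [← integral_finset_sum _ hGint]
    refine integral_ge_const P _ _ (2*k) ?_ hGpt
    intro w
    calc ‖∑ j ∈ Finset.range k, G j w‖ ≤ ∑ j ∈ Finset.range k, ‖G j w‖ := norm_sum_le _ _
      _ ≤ ∑ _j ∈ Finset.range k, (2:ℝ) := Finset.sum_le_sum (fun j _ => hGnorm j w)
      _ = 2*k := by rw [Finset.sum_const, Finset.card_range, nsmul_eq_mul]; ring
  have hex : ∃ j ∈ Finset.range k, s ≤ ∫ w, G j w ∂P := by
    by_contra hno
    push_neg at hno
    have hlt : ∑ j ∈ Finset.range k, ∫ w, G j w ∂P < ∑ _j ∈ Finset.range k, s :=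
      Finset.sum_lt_sum_of_nonempty ⟨0, Finset.mem_range.mpr hk0⟩ hno
    rw [Finset.sum_const, Finset.card_range, nsmul_eq_mul] at hlt
    linarith
  obtain ⟨j, hjr, hjint⟩ := hex
  haveI : IsProbabilityMeasure (muTe k (j+1)) := hPμt (j+1)
  have hcoord : MeasurePreserving (fun x : ℕ => (x, fpt (j+1) x)) (nuU k) (muTe k (j+1)) :=
    ⟨measurable_of_countable _, rfl⟩
  have hmp : MeasurePreserving
      (Prod.map (id : (Fin n → ℕ × Bool) → (Fin n → ℕ × Bool))
        (fun z (i : Fin n) => (z i, fpt (j+1) (z i)))) P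
      ((Measure.pi fun _ : Fin n => μ).prod (Measure.pi fun _ : Fin n => muTe k (j+1))) :=
    (MeasurePreserving.id _).prod (measurePreserving_pi _ _ (fun _ => hcoord))
  have htrans : (∫ ω : (Fin n → ℕ × Bool) × (Fin n → ℕ × Bool),
      (fun hS : (ℕ → Bool) × Set ℕ =>
        (muTe k (j+1) {p : ℕ × Bool | hS.1 p.1 ≠ p.2 ∧ p.1 ∈ hS.2}).toReal +
        (μ {p : ℕ × Bool | p.1 ∉ hS.2}).toReal)
        (L (fun i => (ω.1 i).1) (fun i => (ω.1 i).2) (fun i => (ω.2 i).1))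
      ∂((Measure.pi fun _ : Fin n => μ).prod (Measure.pi fun _ : Fin n => muTe k (j+1))))
      = ∫ w, G j w ∂P := by
    rw [← hmp.map_eq, integral_map hmp.measurable.aemeasurable
      ((measurable_of_countable _).aestronglyMeasurable)]
    rfl
  refine ⟨μ, muTe k (j+1), hPμ, hPμt (j+1), fpt (j+1), Or.inr ⟨j+1, rfl⟩, ?_, ?_, ?_⟩
  · have happ : μ {p : ℕ × Bool | fpt (j+1) p.1 ≠ p.2} = ε' := by
      rw [hμ, muTr_apply]
      have h0 : ({p : ℕ × Bool | fpt (j+1) p.1 ≠ p.2}.indicator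
          (1 : ℕ × Bool → ℝ≥0∞) (((0:ℕ), true))) = 0 := by
        apply Set.indicator_of_notMem
        simp [fpt]
      rw [h0, mul_zero, zero_add]
      have hterm : ∀ i, ε' * ({p : ℕ × Bool | fpt (j+1) p.1 ≠ p.2}.indicator 1 ((i+1:ℕ), true))
          = if i = j then ε' else 0 := by
        intro i
        by_cases hij : i = j
        · subst hij
          simp [Set.indicator_apply, fpt]
        · have hne : (i+1:ℕ) ≠ j+1 := by omega
          simp [Set.indicator_apply, fpt, hne, hij]
      simp only [hterm]
      rw [Finset.sum_ite_eq' (Finset.range k) j (fun _ => ε'), if_pos hjr]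
    rw [happ, hε', ENNReal.toReal_ofReal hε0.le]
    linarith
  · have hempty : {x : ℕ | (x, fpt (j+1) x) ∈ {p : ℕ × Bool | fpt (j+1) p.1 ≠ p.2}} = ∅ := by
      ext x; simp
    rw [muTe_apply, hempty]
    simp [h0t]
  · rw [htrans]
    exact max_le hjint (le_trans hcase.le hjint)

lemma vcdim_Cstar : VCDim Cstar 1 := by
  constructor
  · refine ⟨{0}, rfl, fun b => ?_⟩
    by_cases hb : b 0 = true
    · refine ⟨fun _ => true, Or.inl rfl, fun a ha => ?_⟩
      simp only [Finset.mem_singleton] at ha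
      subst ha
      exact hb.symm
    · refine ⟨fpt 0, Or.inr ⟨0, rfl⟩, fun a ha => ?_⟩
      simp only [Finset.mem_singleton] at ha
      subst ha
      simp only [Bool.not_eq_true] at hb
      simp [fpt, hb]
  · intro A hA
    by_contra hcard
    push_neg at hcard
    obtain ⟨a, ha, b, hb, hab⟩ := Finset.one_lt_card.mp hcard
    obtain ⟨g, hg, hgall⟩ := hA (fun _ => false)
    have hga := hgall a ha
    have hgb := hgall b hb
    rcases hg with h | ⟨j, h⟩ <;> subst h
    · simp at hga
    · simp only [fpt, decide_eq_false_iff_not, not_not] at hga hgb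
      exact hab (hga.trans hgb.symm)


lemma case1 (η ηt : ℝ) (h0η : 0 ≤ η) (h0t : 0 ≤ ηt) (ht2 : ηt ≤ 1/2)
    (hcase : Real.sqrt (η/8) ≤ ηt)
    (n : ℕ) (L : (Fin n → ℕ) → (Fin n → Bool) → (Fin n → ℕ) → (ℕ → Bool) × Set ℕ) :
    ∃ μ μt : Measure (ℕ × Bool), IsProbabilityMeasure μ ∧ IsProbabilityMeasure μt ∧
    ∃ f ∈ Cstar,
      (μ {p : ℕ × Bool | f p.1 ≠ p.2}).toReal ≤ η ∧
      (μt {p : ℕ × Bool | f p.1 ≠ p.2}).toReal ≤ ηt ∧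
      max (Real.sqrt (η / 8)) ηt ≤
        ∫ ω : (Fin n → ℕ × Bool) × (Fin n → ℕ × Bool),
          (fun hS : (ℕ → Bool) × Set ℕ =>
            (μt {p : ℕ × Bool | hS.1 p.1 ≠ p.2 ∧ p.1 ∈ hS.2}).toReal +
            (μ {p : ℕ × Bool | p.1 ∉ hS.2}).toReal)
            (L (fun i => (ω.1 i).1) (fun i => (ω.1 i).2) (fun i => (ω.2 i).1))
          ∂((Measure.pi fun _ : Fin n => μ).prod (Measure.pi fun _ : Fin n => μt)) := by
  set T := ENNReal.ofReal ηt with hT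
  have hT1 : T ≤ 1 := ENNReal.ofReal_le_one.mpr (by linarith)
  set μ : Measure (ℕ × Bool) := Measure.dirac ((0:ℕ), true) with hμ
  set μt : Measure (ℕ × Bool) :=
    (1 - T) • Measure.dirac ((0:ℕ), true) + T • Measure.dirac ((0:ℕ), false) with hμt
  have hμtapp : ∀ E : Set (ℕ × Bool),
      μt E = (1 - T) * (E.indicator 1 ((0:ℕ), true)) + T * (E.indicator 1 ((0:ℕ), false)) := by
    intro E
    simp [hμt, Measure.dirac_apply, smul_eq_mul]
  have hμapp : ∀ E : Set (ℕ × Bool), μ E = E.indicator 1 ((0:ℕ), true) := by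
    intro E; simp [hμ, Measure.dirac_apply]
  have hPμ : IsProbabilityMeasure μ := by rw [hμ]; infer_instance
  have hPμt : IsProbabilityMeasure μt := by
    constructor
    rw [hμtapp]
    simp only [Set.indicator_univ, Pi.one_apply, mul_one]
    exact tsub_add_cancel_of_le hT1
  have hcompl : ENNReal.ofReal (1 - ηt) = 1 - T := by
    refine ENNReal.eq_sub_of_add_eq ENNReal.ofReal_ne_top ?_
    rw [hT, ← ENNReal.ofReal_add (by linarith) h0t]
    norm_num
  refine ⟨μ, μt, hPμ, hPμt, (fun _ => true), Or.inl rfl, ?_, ?_, ?_⟩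
  · rw [hμapp]
    simp [Set.indicator_apply, h0η]
  · rw [hμtapp]
    have h1 : (((0:ℕ), true) ∈ {p : ℕ × Bool | (fun _ => true) p.1 ≠ p.2}) = False := by
      simp
    simp only [Set.indicator_apply, h1]
    simp [ENNReal.toReal_ofReal h0t]
    exact (by rw [hT, ENNReal.toReal_ofReal h0t] : T.toReal = ηt).le
  · have hpt : ∀ ω : (Fin n → ℕ × Bool) × (Fin n → ℕ × Bool), ηt ≤
        (fun hS : (ℕ → Bool) × Set ℕ =>
            (μt {p : ℕ × Bool | hS.1 p.1 ≠ p.2 ∧ p.1 ∈ hS.2}).toReal +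
            (μ {p : ℕ × Bool | p.1 ∉ hS.2}).toReal)
            (L (fun i => (ω.1 i).1) (fun i => (ω.1 i).2) (fun i => (ω.2 i).1)) := by
      intro ω
      set hS := L (fun i => (ω.1 i).1) (fun i => (ω.1 i).2) (fun i => (ω.2 i).1) with hhS
      simp only
      by_cases h0S : (0:ℕ) ∈ hS.2
      · have hfirst : ηt ≤ (μt {p : ℕ × Bool | hS.1 p.1 ≠ p.2 ∧ p.1 ∈ hS.2}).toReal := by
          by_cases hh : hS.1 0 = true
          · have hmem : (((0:ℕ), false) ∈ {p : ℕ × Bool | hS.1 p.1 ≠ p.2 ∧ p.1 ∈ hS.2}) := by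
              simp [hh, h0S]
            have hge : T ≤ μt {p : ℕ × Bool | hS.1 p.1 ≠ p.2 ∧ p.1 ∈ hS.2} := by
              rw [hμtapp, Set.indicator_of_mem hmem, Pi.one_apply, mul_one]
              exact le_add_self
            have := ENNReal.toReal_mono (measure_ne_top μt _) hge
            rwa [hT, ENNReal.toReal_ofReal h0t] at this
          · have hmem : (((0:ℕ), true) ∈ {p : ℕ × Bool | hS.1 p.1 ≠ p.2 ∧ p.1 ∈ hS.2}) := by
              simp only [Set.mem_setOf_eq]
              exact ⟨by simp [hh], h0S⟩
            have hge : 1 - T ≤ μt {p : ℕ × Bool | hS.1 p.1 ≠ p.2 ∧ p.1 ∈ hS.2} := by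
              rw [hμtapp, Set.indicator_of_mem hmem, Pi.one_apply, mul_one]
              exact le_self_add
            rw [← hcompl] at hge
            have := ENNReal.toReal_mono (measure_ne_top μt _) hge
            rw [ENNReal.toReal_ofReal (by linarith)] at this
            linarith
        have := ENNReal.toReal_nonneg (a := μ {p : ℕ × Bool | p.1 ∉ hS.2})
        linarith
      · have hsec : (μ {p : ℕ × Bool | p.1 ∉ hS.2}).toReal = 1 := by
          rw [hμapp]
          simp [Set.indicator_apply, h0S]
        have := ENNReal.toReal_nonneg (a := μt {p : ℕ × Bool | hS.1 p.1 ≠ p.2 ∧ p.1 ∈ hS.2})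
        rw [hsec]
        linarith
    have hint := integral_ge_const
      ((Measure.pi fun _ : Fin n => μ).prod (Measure.pi fun _ : Fin n => μt)) _ ηt 2
      (fun ω => norm_F_le hPμ hPμt _ _) hpt
    exact max_le (le_trans hcase hint) hint

end Stmt19Aux

/-- semi-agnostic lower bound. -/
theorem stmt19 : ∃ C : Set (ℕ → Bool), VCDim C 1 ∧
    ∀ η ηt : ℝ, 0 ≤ η → η ≤ 1 / 2 → 0 ≤ ηt → ηt ≤ 1 / 2 →
    ∀ n : ℕ, 1 ≤ n →
    ∀ L : (Fin n → ℕ) → (Fin n → Bool) → (Fin n → ℕ) → (ℕ → Bool) × Set ℕ,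
    ∃ μ μt : Measure (ℕ × Bool), IsProbabilityMeasure μ ∧ IsProbabilityMeasure μt ∧
    ∃ f ∈ C,
      (μ {p : ℕ × Bool | f p.1 ≠ p.2}).toReal ≤ η ∧
      (μt {p : ℕ × Bool | f p.1 ≠ p.2}).toReal ≤ ηt ∧
      max (Real.sqrt (η / 8)) ηt ≤
        ∫ ω : (Fin n → ℕ × Bool) × (Fin n → ℕ × Bool),
          (fun hS : (ℕ → Bool) × Set ℕ =>
            (μt {p : ℕ × Bool | hS.1 p.1 ≠ p.2 ∧ p.1 ∈ hS.2}).toReal +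
            (μ {p : ℕ × Bool | p.1 ∉ hS.2}).toReal)
            (L (fun i => (ω.1 i).1) (fun i => (ω.1 i).2) (fun i => (ω.2 i).1))
          ∂((Measure.pi fun _ : Fin n => μ).prod (Measure.pi fun _ : Fin n => μt)) := by
  refine ⟨Cstar, vcdim_Cstar, ?_⟩
  intro η ηt h0η hη2 h0t ht2 n _hn L
  rcases le_or_gt (Real.sqrt (η / 8)) ηt with hc | hc
  · exact case1 η ηt h0η h0t ht2 hc n L
  · exact case2 η ηt h0η hη2 h0t hc n L
end
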